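/- arXiv:0805.2493 — 12 statements merged into one kernel-verified Lean document; each statement's English description precedes it below -/
import Mathlib

section
/- Two unit cubes z+[0,1]^n and z'+[0,1]^n with z, z' in (1/N)Z^n, both contained in the torus R^n/2Z^n, have disjoint interiors if and only if there exists an index i in {1,...,n} such that z_i ≡ z'_i + 1 (mod 2). -/
/-- One-dimensional key fact: the images of the open unit intervals `(a, a+1)` and
`(b, b+1)` in `ℝ / 2ℤ` intersect iff `a - b` is not an odd integer. -/
lemma real_key (a b : ℝ) :
    (∃ x y : ℝ, (a < x ∧ x < a + 1) ∧ (b < y ∧ y < b + 1) ∧ ∃ k : ℤ, x - y = 2 * k) ↔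
    ¬ ∃ k : ℤ, a - b = 2 * k + 1 := by
  constructor
  · rintro ⟨x, y, ⟨hx1, hx2⟩, ⟨hy1, hy2⟩, k, hk⟩ ⟨m, hm⟩
    have h1 : (m : ℝ) < k := by linarith
    have h2 : (k : ℝ) < m + 1 := by linarith
    have h1' : m < k := by exact_mod_cast h1
    have h2' : (k : ℝ) < ((m + 1 : ℤ) : ℝ) := by push_cast; linarith
    have h2'' : k < m + 1 := by exact_mod_cast h2'
    omega
  · intro h
    set k : ℤ := round ((a - b) / 2) with hkdef
    have hr : |(a - b) / 2 - k| ≤ 1 / 2 := abs_sub_round _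
    have hr1 : (a - b) / 2 - k ≤ 1 / 2 := (abs_le.mp hr).2
    have hr2 : -(1 / 2) ≤ (a - b) / 2 - k := (abs_le.mp hr).1
    have hne1 : a - b ≠ 2 * k + 1 := fun hc => h ⟨k, hc⟩
    have hne2 : a - b ≠ 2 * (k - 1) + 1 := fun hc => h ⟨k - 1, by push_cast; linarith⟩
    have hlt1 : a - b < 2 * k + 1 := lt_of_le_of_ne (by linarith) hne1
    have hlt2 : 2 * k - 1 < a - b := by
      rcases lt_or_eq_of_le (by linarith : 2 * (k : ℝ) - 1 ≤ a - b) with h' | h'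
      · exact h'
      · exact absurd h'.symm (by push_cast at hne2 ⊢; intro hc; exact hne2 (by linarith))
    -- the intervals `(b, b+1)` and `(a - 2k, a + 1 - 2k)` intersect
    have hmaxmin : max b (a - 2 * k) < min (b + 1) (a + 1 - 2 * k) := by
      apply max_lt <;> apply lt_min <;> linarith
    set y : ℝ := (max b (a - 2 * k) + min (b + 1) (a + 1 - 2 * k)) / 2 with hydef
    have hy1 : max b (a - 2 * k) < y := by simp only [hydef]; linarith
    have hy2 : y < min (b + 1) (a + 1 - 2 * k) := by simp only [hydef]; linarith
    have hb1 : b < y := lt_of_le_of_lt (le_max_left _ _) hy1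
    have hb2 : y < b + 1 := lt_of_lt_of_le hy2 (min_le_left _ _)
    have ha1 : a - 2 * k < y := lt_of_le_of_lt (le_max_right _ _) hy1
    have ha2 : y < a + 1 - 2 * k := lt_of_lt_of_le hy2 (min_le_right _ _)
    exact ⟨y + 2 * k, y, ⟨by linarith, by linarith⟩, ⟨hb1, hb2⟩, k, by ring⟩

/-- Arithmetic translation: `(z - z')/N` is an odd integer iff
`z ≡ z' + N (mod 2N)`. -/
lemma arith_key (N : ℕ) (hN : 1 ≤ N) (z z' : ℤ) :
    (∃ k : ℤ, (z : ℝ) / N - (z' : ℝ) / N = 2 * k + 1) ↔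
    ((z : ZMod (2 * N)) = (z' : ZMod (2 * N)) + (N : ZMod (2 * N))) := by
  haveI : NeZero (2 * N) := ⟨by omega⟩
  have hN0 : (N : ℝ) ≠ 0 := by positivity
  constructor
  · rintro ⟨k, hk⟩
    have hre : (z : ℝ) - z' = (2 * k + 1) * N := by
      field_simp at hk; linarith
    have hz : (z : ℝ) = ((z' + (2 * k + 1) * N : ℤ) : ℝ) := by push_cast; linarith
    have hz' : z = z' + (2 * k + 1) * (N : ℤ) := by exact_mod_cast hz
    have hdvd : ((2 * N : ℕ) : ℤ) ∣ z - z' - N := ⟨k, by push_cast; linarith⟩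
    have h0 : ((z - z' - N : ℤ) : ZMod (2 * N)) = 0 :=
      (ZMod.intCast_zmod_eq_zero_iff_dvd _ _).mpr hdvd
    push_cast at h0
    linear_combination h0
  · intro h
    have h0 : ((z - z' - N : ℤ) : ZMod (2 * N)) = 0 := by
      push_cast
      linear_combination h
    have hdvd : ((2 * N : ℕ) : ℤ) ∣ z - z' - N :=
      (ZMod.intCast_zmod_eq_zero_iff_dvd _ _).mp h0
    obtain ⟨c, hc⟩ := hdvd
    refine ⟨c, ?_⟩
    have : (z : ℝ) - z' - N = 2 * N * c := by exact_mod_cast congrArg (Int.cast : ℤ → ℝ) hc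
    field_simp
    linarith

/-- Two cubes `z/N + [0,1]^n`, `z'/N + [0,1]^n` in the torus
`ℝ^n / 2ℤ^n` have disjoint interiors iff some coordinate satisfies
`z_i ≡ z'_i + 1 (mod 2)`, i.e. the numerators satisfy `z_i ≡ z'_i + N (mod 2N)`. -/
theorem stmt_0 (n N : ℕ) (hn : 1 ≤ n) (hN : 1 ≤ N) (z z' : Fin n → ℤ) :
    Disjoint
      ((fun x : Fin n → ℝ => fun i => (QuotientAddGroup.mk (x i) : AddCircle (2 : ℝ))) ''
        {x : Fin n → ℝ | ∀ i, (z i : ℝ) / N < x i ∧ x i < (z i : ℝ) / N + 1})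
      ((fun x : Fin n → ℝ => fun i => (QuotientAddGroup.mk (x i) : AddCircle (2 : ℝ))) ''
        {x : Fin n → ℝ | ∀ i, (z' i : ℝ) / N < x i ∧ x i < (z' i : ℝ) / N + 1})
    ↔ ∃ i : Fin n, (z i : ZMod (2 * N)) = (z' i : ZMod (2 * N)) + (N : ZMod (2 * N)) := by
  constructor
  · intro hdisj
    by_contra hne
    push_neg at hne
    have hkey : ∀ i : Fin n, ∃ x y : ℝ,
        ((z i : ℝ) / N < x ∧ x < (z i : ℝ) / N + 1) ∧
        ((z' i : ℝ) / N < y ∧ y < (z' i : ℝ) / N + 1) ∧ ∃ k : ℤ, x - y = 2 * k := by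
      intro i
      refine (real_key _ _).mpr ?_
      intro hodd
      exact hne i ((arith_key N hN (z i) (z' i)).mp hodd)
    choose x y hx using hkey
    have hxmem : x ∈ {x : Fin n → ℝ | ∀ i, (z i : ℝ) / N < x i ∧ x i < (z i : ℝ) / N + 1} :=
      fun i => (hx i).1
    have hymem : y ∈ {x : Fin n → ℝ | ∀ i, (z' i : ℝ) / N < x i ∧ x i < (z' i : ℝ) / N + 1} :=
      fun i => (hx i).2.1
    have heq : (fun i => (QuotientAddGroup.mk (x i) : AddCircle (2 : ℝ)))
        = fun i => (QuotientAddGroup.mk (y i) : AddCircle (2 : ℝ)) := by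
      funext i
      obtain ⟨k, hk⟩ := (hx i).2.2
      apply QuotientAddGroup.eq.mpr
      refine ⟨-k, ?_⟩
      simp only [zsmul_eq_mul]
      push_cast
      linarith
    exact Set.disjoint_left.mp hdisj ⟨x, hxmem, rfl⟩ ⟨y, hymem, heq.symm⟩
  · rintro ⟨i, hi⟩
    rw [Set.disjoint_left]
    rintro p ⟨x, hx, rfl⟩ ⟨y, hy, hpy⟩
    have hcoord : (QuotientAddGroup.mk (y i) : AddCircle (2 : ℝ))
        = QuotientAddGroup.mk (x i) := congrFun hpy i
    obtain ⟨k, hk⟩ := QuotientAddGroup.eq.mp hcoord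
    simp only [zsmul_eq_mul] at hk
    have hodd := (arith_key N hN (z i) (z' i)).mpr hi
    refine (real_key ((z i : ℝ) / N) ((z' i : ℝ) / N)).mp
      ⟨x i, y i, hx i, hy i, k, ?_⟩ hodd
    push_cast at hk ⊢
    linarith
end

section
/- In the discrete torus model, if (z^i)_{1≤i≤m} with z^i ∈ (1/N)Z^n is a family of translation vectors such that for every pair i ≠ i' there is a coordinate j with z^i_j ≡ z^{i'}_j + 1 (mod 2), and the family is non-extensible (no z ∈ (1/N)Z^n exists with z_j ≡ z^i_j + 1 (mod 2) in some coordinate for every i), then m ≥ n+1. -/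
/-- A non-extensible discrete torus cube packing in dimension `n`
has at least `n+1` cubes.  Vectors in `(1/N)ℤ^n mod 2` are encoded by their
numerators in `ZMod (2N)`; the condition `z_j ≡ z'_j + 1 (mod 2)` becomes
`z_j = z'_j + N` in `ZMod (2N)`. -/
theorem stmt_1 (n N m : ℕ) (hN : 1 ≤ N) (z : Fin m → Fin n → ZMod (2 * N))
    (hpack : ∀ i i', i ≠ i' → ∃ j, z i j = z i' j + (N : ZMod (2 * N)))
    (hnonext : ¬ ∃ w : Fin n → ZMod (2 * N), ∀ i, ∃ j, w j = z i j + (N : ZMod (2 * N))) :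
    n + 1 ≤ m := by
  by_contra h
  push_neg at h
  have hm : m ≤ n := Nat.lt_succ_iff.mp (by omega)
  apply hnonext
  refine ⟨fun j => if hj : j.val < m then z ⟨j.val, hj⟩ j + (N : ZMod (2 * N)) else 0, fun i => ?_⟩
  refine ⟨⟨i.val, lt_of_lt_of_le i.isLt hm⟩, ?_⟩
  simp
end

section
/- If m ≤ n and z^1,...,z^m ∈ (1/N)Z^n is any family of vectors with N ≥ 2, then there exists z ∈ (1/N)Z^n such that for every i ∈ {1,...,m}, the coordinate z_i satisfies z_i ≡ z^i_i + 1 (mod 2); consequently every torus cube packing with at most n cubes is extensible. -/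
/-- If `m ≤ n`, any family of `m` vectors in `(1/N)ℤ^n mod 2`
(numerators in `ZMod (2N)`) admits a vector `w` with `w_i ≡ z^i_i + 1 (mod 2)`
for every `i`; consequently every torus cube packing with at most `n` cubes is
extensible. -/
theorem stmt_2 (n N m : ℕ) (hN : 2 ≤ N) (hm : m ≤ n) (z : Fin m → Fin n → ZMod (2 * N)) :
    (∃ w : Fin n → ZMod (2 * N),
      ∀ i : Fin m, w (Fin.castLE hm i) = z i (Fin.castLE hm i) + (N : ZMod (2 * N)))
    ∧ (∃ w : Fin n → ZMod (2 * N), ∀ i : Fin m, ∃ j, w j = z i j + (N : ZMod (2 * N))) := by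
  refine ⟨⟨fun j => if h : j.val < m then z ⟨j.val, h⟩ j + (N : ZMod (2 * N)) else 0, ?_⟩,
    ⟨fun j => if h : j.val < m then z ⟨j.val, h⟩ j + (N : ZMod (2 * N)) else 0, ?_⟩⟩
  · intro i
    simp [Fin.castLE, i.isLt]
  · intro i
    exact ⟨Fin.castLE hm i, by simp [Fin.castLE, i.isLt]⟩
end

section
/- Let G be a non-extensible combinatorial torus cube packing in dimension n. Then every parameter t that occurs in some coordinate of some cube of G also occurs as t+1 in that same coordinate of some (possibly different) cube of G. -/
/-- A combinatorial torus cube: each coordinate carries a formal parameter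
(first component) together with a bit distinguishing `t` from `t+1`. -/
def IsPacking {ι : Type*} {n : ℕ} {α : Type*} (G : ι → Fin n → α × Bool) : Prop :=
  ∀ i i', i ≠ i' → ∃ j, (G i j).1 = (G i' j).1 ∧ (G i j).2 ≠ (G i' j).2

/-- A cube (possibly using fresh parameters, drawn from `ℕ`) can be added to the
packing, i.e. it does not overlap any cube of the packing. -/
def Addable {ι : Type*} {n : ℕ} {α : Type*} (G : ι → Fin n → α × Bool) : Prop :=
  ∃ c : Fin n → (α ⊕ ℕ) × Bool,
    ∀ i, ∃ j, (c j).1 = Sum.inl (G i j).1 ∧ (c j).2 ≠ (G i j).2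

/-- In a non-extensible combinatorial torus cube packing, every
parameter occurring (as `t` or `t+1`) in some coordinate of some cube also
occurs with the opposite shift in that coordinate of some cube. -/
theorem stmt_3 {n m : ℕ} {α : Type*} (G : Fin m → Fin n → α × Bool)
    (hpack : IsPacking G) (hsmall : m < 2 ^ n) (hnonext : ¬ Addable G) :
    ∀ (j : Fin n) (t : α) (b : Bool), (∃ i, G i j = (t, b)) → ∃ i', G i' j = (t, !b) := by
  intro j t b ⟨i0, hi0⟩
  by_contra hno
  push_neg at hno
  apply hnonext
  -- candidate: the cube i0 translated by one unit in coordinate j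
  refine ⟨fun k => if k = j then (Sum.inl t, !b) else (Sum.inl (G i0 k).1, (G i0 k).2), ?_⟩
  intro i
  by_cases hij : (G i j).1 = t
  · -- the bit of cube i at j must be b, so coordinate j separates
    have hbit : (G i j).2 = b := by
      cases hb : (G i j).2
      · cases b
        · rfl
        · exact absurd (Prod.ext hij hb) (by simpa using hno i)
      · cases b
        · exact absurd (Prod.ext hij hb) (by simpa using hno i)
        · rfl
    refine ⟨j, ?_, ?_⟩
    · simp [hij]
    · simp [hbit]
  · -- i ≠ i0, use the packing separation, which happens away from j
    have hne : i ≠ i0 := by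
      intro h; apply hij; rw [h, hi0]
    obtain ⟨k, hk1, hk2⟩ := hpack i i0 hne
    have hkj : k ≠ j := by
      intro h; apply hij; rw [h] at hk1; rw [hk1, hi0]
    refine ⟨k, ?_, ?_⟩
    · simp [hkj, hk1]
    · simp [hkj]; exact fun h => hk2 h.symm
end

section
/- Let G be a non-extensible combinatorial torus cube packing in dimension n, let C_1,...,C_k be cubes of G, and let G' = G \ {C_1,...,C_k}. If C is a cube that does not overlap with any cube of G', then the number of parameters of C that do not occur in G' is at most k-1. -/
/-- Two combinatorial torus cubes are non-overlapping iff some coordinate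
carries the same parameter with opposite shifts (`t` vs `t+1`). -/
def NonOverlap {n : ℕ} {α : Type*} (a b : Fin n → α × Bool) : Prop :=
  ∃ j, (a j).1 = (b j).1 ∧ (a j).2 ≠ (b j).2

/-- Let `G` be a non-extensible combinatorial torus cube packing,
`S ⊆ G` a set of `k` cubes and `G' = G \ S`.  If a cube `C` does not overlap
any cube of `G'`, then the number of parameters (coordinates) of `C` not
occurring in `G'` is at most `k - 1`. -/
theorem stmt_4 {n : ℕ} {α : Type*} [DecidableEq α]
    (G S : Finset (Fin n → α × Bool)) (hS : S ⊆ G)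
    (hpack : ∀ a ∈ G, ∀ b ∈ G, a ≠ b → NonOverlap a b)
    (hsmall : G.card < 2 ^ n)
    (hnonext : ¬ ∃ c : Fin n → (α ⊕ ℕ) × Bool,
      ∀ D ∈ G, ∃ j, (c j).1 = Sum.inl (D j).1 ∧ (c j).2 ≠ (D j).2)
    (C : Fin n → α × Bool)
    (hC : ∀ D ∈ G \ S, NonOverlap C D) :
    (Finset.univ.filter (fun j : Fin n => ∀ D ∈ G \ S, (D j).1 ≠ (C j).1)).card
      ≤ S.card - 1 := by
  classical
  set F := Finset.univ.filter (fun j : Fin n => ∀ D ∈ G \ S, (D j).1 ≠ (C j).1) with hF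
  by_contra hlt
  push_neg at hlt
  have hcard : S.card ≤ F.card := by omega
  obtain ⟨φ⟩ : Nonempty ({x // x ∈ S} ↪ {j // j ∈ F}) := by
    apply Function.Embedding.nonempty_of_card_le
    simpa [Fintype.card_coe] using hcard
  apply hnonext
  refine ⟨fun j => if h : ∃ D' : {x // x ∈ S}, (φ D' : Fin n) = j then
      (Sum.inl ((h.choose.1) j).1, !((h.choose.1) j).2) else
      (Sum.inl (C j).1, (C j).2), ?_⟩
  intro D hD
  by_cases hDS : D ∈ S
  · have hex : ∃ D' : {x // x ∈ S}, (φ D' : Fin n) = (φ ⟨D, hDS⟩ : Fin n) :=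
      ⟨⟨D, hDS⟩, rfl⟩
    refine ⟨(φ ⟨D, hDS⟩ : Fin n), ?_⟩
    have hch : hex.choose = ⟨D, hDS⟩ := by
      have h1 : φ hex.choose = φ ⟨D, hDS⟩ := Subtype.ext hex.choose_spec
      exact φ.injective h1
    beta_reduce
    rw [dif_pos hex, hch]
    simp
  · have hDG : D ∈ G \ S := Finset.mem_sdiff.mpr ⟨hD, hDS⟩
    obtain ⟨j, h1, h2⟩ := hC D hDG
    have hjF : j ∉ F := by
      simp only [hF, Finset.mem_filter]
      rintro ⟨-, h⟩
      exact h D hDG h1.symm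
    have hex : ¬ ∃ D' : {x // x ∈ S}, (φ D' : Fin n) = j := by
      rintro ⟨D', hD'⟩
      exact hjF (hD' ▸ (φ D').2)
    refine ⟨j, ?_⟩
    beta_reduce
    rw [dif_neg hex]
    exact ⟨by rw [h1], h2⟩
end

section
/- Let G be a non-extensible combinatorial torus cube packing in dimension n with exactly n+1 cubes. Then for every coordinate j and every parameter t, the number of cubes of G whose j-th coordinate equals t is exactly 1, and likewise the number of cubes whose j-th coordinate equals t+1 is exactly 1 (provided t occurs at all in coordinate j). Consequently n+1 is even, so no non-extensible combinatorial torus cube packing with n+1 cubes exists for even n, and when n is odd any such packing uses exactly n(n+1)/2 parameters. -/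
lemma bool_eq_not {x y : Bool} (h : x ≠ y) : x = !y := by
  cases x <;> cases y <;> simp_all

/-- In a non-extensible packing with n+1 cubes, each value (t,b) occurs at most
once in each coordinate. -/
lemma atMostOne {n : ℕ} {α : Type*} [DecidableEq α]
    {G : Fin (n + 1) → Fin n → α × Bool} (hnonext : ¬ Addable G)
    {j₀ : Fin n} {t : α} {b : Bool} {i₁ i₂ : Fin (n + 1)}
    (h1 : G i₁ j₀ = (t, b)) (h2 : G i₂ j₀ = (t, b)) : i₁ = i₂ := by
  classical
  by_contra hne
  apply hnonext
  have : Nonempty (Fin n) := ⟨j₀⟩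
  set R : Finset (Fin (n + 1)) := Finset.univ.filter (fun i => G i j₀ ≠ (t, b)) with hRdef
  set T : Finset (Fin n) := Finset.univ.filter (fun j => j ≠ j₀) with hTdef
  have hi1 : i₁ ∉ R := by simp [hRdef, h1]
  have hi2 : i₂ ∉ R := by simp [hRdef, h2]
  have hTcard : T.card = n - 1 := by
    rw [hTdef, Finset.filter_ne', Finset.card_erase_of_mem (Finset.mem_univ _),
      Finset.card_univ, Fintype.card_fin]
  have hRcard : R.card ≤ n - 1 := by
    have hsub : R ⊆ Finset.univ \ {i₁, i₂} := by
      intro x hx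
      simp only [Finset.mem_sdiff, Finset.mem_univ, true_and, Finset.mem_insert,
        Finset.mem_singleton]
      rintro (rfl | rfl)
      · exact hi1 hx
      · exact hi2 hx
    have := Finset.card_le_card hsub
    rw [Finset.card_sdiff_of_subset (by simp), Finset.card_univ, Fintype.card_fin,
      Finset.card_pair hne] at this
    omega
  have hcard : (↑R : Set (Fin (n + 1))).encard ≤ (↑T : Set (Fin n)).encard := by
    rw [Set.encard_coe_eq_coe_finsetCard, Set.encard_coe_eq_coe_finsetCard]
    exact_mod_cast hRcard.trans hTcard.ge
  obtain ⟨f, hmap, hinj⟩ := Set.Finite.exists_injOn_of_encard_le R.finite_toSet hcard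
  refine ⟨fun j => if j = j₀ then (Sum.inl t, !b)
    else if h : ∃ r, r ∈ R ∧ f r = j then (Sum.inl (G h.choose j).1, !(G h.choose j).2)
    else (Sum.inr 0, true), fun i => ?_⟩
  by_cases hi : G i j₀ = (t, b)
  · refine ⟨j₀, ?_, ?_⟩ <;> simp [hi]
  · have hiR : i ∈ R := by simp [hRdef, hi]
    have hfi : f i ∈ T := by
      have := hmap hiR
      simpa using this
    have hfij₀ : f i ≠ j₀ := by
      rw [hTdef] at hfi
      simpa using hfi
    have hex : ∃ r, r ∈ R ∧ f r = f i := ⟨i, hiR, rfl⟩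
    have hch : hex.choose = i := hinj hex.choose_spec.1 hiR hex.choose_spec.2
    refine ⟨f i, ?_, ?_⟩
    · simp only [if_neg hfij₀, dif_pos hex, hch]
    · simp only [if_neg hfij₀, dif_pos hex, hch]
      simp

/-- If (t,b) occurs at coordinate j₀, then (t,!b) also occurs there. -/
lemma existsOpp {n : ℕ} {α : Type*} [DecidableEq α]
    {G : Fin (n + 1) → Fin n → α × Bool} (hpack : IsPacking G)
    (hnonext : ¬ Addable G) {j₀ : Fin n} {t : α} {b : Bool}
    (h : ∃ i, G i j₀ = (t, b)) : ∃ i, G i j₀ = (t, !b) := by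
  classical
  by_contra hno
  push_neg at hno
  obtain ⟨i₀, hi₀⟩ := h
  have hψ : ∀ i : Fin (n + 1), i ≠ i₀ →
      ∃ j, (G i₀ j).1 = (G i j).1 ∧ (G i₀ j).2 ≠ (G i j).2 :=
    fun i hi => hpack i₀ i (Ne.symm hi)
  set ψ : Fin (n + 1) → Fin n := fun i =>
    if h : i ≠ i₀ then (hψ i h).choose else j₀ with hψdef
  have hspec : ∀ i, (hne : i ≠ i₀) →
      G i (ψ i) = ((G i₀ (ψ i)).1, !(G i₀ (ψ i)).2) := by
    intro i hne
    have hψi : ψ i = (hψ i hne).choose := by simp [hψdef, hne]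
    obtain ⟨h1, h2⟩ := (hψ i hne).choose_spec
    rw [hψi]
    exact Prod.ext h1.symm (bool_eq_not (Ne.symm h2))
  have hne_j : ∀ i, (hne : i ≠ i₀) → ψ i ≠ j₀ := by
    intro i hne hj
    have := hspec i hne
    rw [hj, hi₀] at this
    exact hno i this
  have hmaps : ∀ i ∈ Finset.univ.erase i₀, ψ i ∈ Finset.univ.erase j₀ := by
    intro i hi
    have hne : i ≠ i₀ := (Finset.mem_erase.mp hi).1
    exact Finset.mem_erase.mpr ⟨hne_j i hne, Finset.mem_univ _⟩
  have hinj : Set.InjOn ψ (Finset.univ.erase i₀) := by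
    intro x hx y hy hxy
    have hxne : x ≠ i₀ := by simpa using hx
    have hyne : y ≠ i₀ := by simpa using hy
    have h1 := hspec x hxne
    have h2 := hspec y hyne
    rw [hxy] at h1
    exact atMostOne hnonext h1 h2
  have hcard := Finset.card_le_card_of_injOn ψ hmaps hinj
  rw [Finset.card_erase_of_mem (Finset.mem_univ _),
    Finset.card_erase_of_mem (Finset.mem_univ _), Finset.card_univ, Finset.card_univ,
    Fintype.card_fin, Fintype.card_fin] at hcard
  have := j₀.pos
  omega

/-- In a non-extensible combinatorial torus cube packing with
exactly `n+1` cubes, every parameter occurring in a coordinate occurs there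
exactly once as `t` and exactly once as `t+1`; consequently `n+1` is even
(so no such packing exists for even `n`) and the packing uses exactly
`n(n+1)/2` parameters (counted as pairs (coordinate, parameter)). -/
theorem stmt_5 {n : ℕ} {α : Type*} [DecidableEq α]
    (G : Fin (n + 1) → Fin n → α × Bool)
    (hpack : IsPacking G) (hsmall : n + 1 < 2 ^ n) (hnonext : ¬ Addable G) :
    (∀ (j : Fin n) (t : α) (b : Bool), (∃ i, G i j = (t, b)) →
      (Finset.univ.filter (fun i => G i j = (t, b))).card = 1 ∧
      (Finset.univ.filter (fun i => G i j = (t, !b))).card = 1)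
    ∧ Even (n + 1)
    ∧ ((Finset.univ : Finset (Fin (n + 1) × Fin n)).image
        (fun q => (q.2, (G q.1 q.2).1))).card = n * (n + 1) / 2 := by
  classical
  have hsingle : ∀ (j : Fin n) (t : α) (b : Bool) (i : Fin (n + 1)), G i j = (t, b) →
      Finset.univ.filter (fun x => G x j = (t, b)) = {i} := by
    intro j t b i hi
    rw [Finset.eq_singleton_iff_unique_mem]
    simp only [Finset.mem_filter, Finset.mem_univ, true_and]
    exact ⟨hi, fun x hx => atMostOne hnonext hx hi⟩
  have part1 : ∀ (j : Fin n) (t : α) (b : Bool), (∃ i, G i j = (t, b)) →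
      (Finset.univ.filter (fun i => G i j = (t, b))).card = 1 ∧
      (Finset.univ.filter (fun i => G i j = (t, !b))).card = 1 := by
    intro j t b h
    obtain ⟨i, hi⟩ := h
    obtain ⟨i', hi'⟩ := existsOpp hpack hnonext ⟨i, hi⟩
    rw [hsingle j t b i hi, hsingle j t (!b) i' hi']
    simp
  have hn : 0 < n := by
    rcases Nat.eq_zero_or_pos n with h | h
    · subst h; norm_num at hsmall
    · exact h
  have key : ∀ j : Fin n, n + 1 = 2 * (Finset.univ.image fun i => (G i j).1).card := by
    intro j
    have hfib : ∀ t ∈ (Finset.univ.image fun i => (G i j).1),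
        (Finset.univ.filter (fun i => (G i j).1 = t)).card = 2 := by
      intro t ht
      simp only [Finset.mem_image, Finset.mem_univ, true_and] at ht
      obtain ⟨i, hi⟩ := ht
      have hib : G i j = (t, (G i j).2) := by rw [← hi]
      obtain ⟨i', hi'⟩ := existsOpp hpack hnonext ⟨i, hib⟩
      have hne : i ≠ i' := by
        intro h
        have h2 : (G i' j).2 = !(G i j).2 := by rw [hi']
        rw [← h] at h2
        simp at h2
      have hset : Finset.univ.filter (fun x => (G x j).1 = t) = {i, i'} := by
        ext x
        simp only [Finset.mem_filter, Finset.mem_univ, true_and, Finset.mem_insert,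
          Finset.mem_singleton]
        constructor
        · intro hx
          by_cases hxb : (G x j).2 = (G i j).2
          · left
            exact atMostOne hnonext (Prod.ext hx hxb) hib
          · right
            exact atMostOne hnonext (Prod.ext hx (bool_eq_not hxb)) hi'
        · rintro (rfl | rfl)
          · rw [hib]
          · rw [hi']
      rw [hset, Finset.card_pair hne]
    have hsum := Finset.card_eq_sum_card_fiberwise
      (f := fun i => (G i j).1) (s := (Finset.univ : Finset (Fin (n + 1))))
      (t := Finset.univ.image fun i => (G i j).1)
      (fun x _ => Finset.mem_image_of_mem _ (Finset.mem_univ x))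
    rw [Finset.card_univ, Fintype.card_fin] at hsum
    calc n + 1 = _ := hsum
      _ = ∑ _t ∈ (Finset.univ.image fun i => (G i j).1), 2 := Finset.sum_congr rfl hfib
      _ = 2 * (Finset.univ.image fun i => (G i j).1).card := by
          rw [Finset.sum_const, smul_eq_mul, mul_comm]
  set m := (Finset.univ.image fun i => (G i ⟨0, hn⟩).1).card with hmdef
  have hm2 : n + 1 = 2 * m := key _
  have hcardj : ∀ j : Fin n, (Finset.univ.image fun i => (G i j).1).card = m := by
    intro j
    have := key j
    omega
  refine ⟨part1, ⟨m, by omega⟩, ?_⟩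
  have himg : (Finset.univ : Finset (Fin (n + 1) × Fin n)).image
      (fun q => (q.2, (G q.1 q.2).1))
      = Finset.univ.biUnion (fun j : Fin n =>
          (Finset.univ.image fun i => (G i j).1).image (fun t => (j, t))) := by
    ext ⟨j, t⟩
    simp only [Finset.mem_image, Finset.mem_biUnion, Finset.mem_univ, true_and,
      Prod.mk.injEq]
    constructor
    · rintro ⟨⟨i, j'⟩, rfl, ht⟩
      exact ⟨j', t, ⟨i, ht⟩, rfl, rfl⟩
    · rintro ⟨j', t', ⟨i, hi⟩, rfl, rfl⟩
      exact ⟨(i, j'), rfl, hi⟩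
  rw [himg, Finset.card_biUnion]
  · have hconst : ∀ j : Fin n,
        ((Finset.univ.image fun i => (G i j).1).image (fun t => (j, t))).card = m := by
      intro j
      rw [Finset.card_image_of_injective _ (fun a b h => by simpa using congrArg Prod.snd h),
        hcardj]
    rw [Finset.sum_congr rfl (fun j _ => hconst j), Finset.sum_const, Finset.card_univ,
      Fintype.card_fin, smul_eq_mul, hm2]
    rw [show n * (2 * m) = n * m * 2 by ring, Nat.mul_div_cancel _ (by norm_num)]
  · intro x _ y _ hxy
    rw [Function.onFun, Finset.disjoint_left]
    intro a ha hb
    simp only [Finset.mem_image] at ha hb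
    obtain ⟨t1, _, rfl⟩ := ha
    obtain ⟨t2, _, hab⟩ := hb
    exact hxy (congrArg Prod.fst hab).symm
end

section
/- Let G be a combinatorial torus cube tiling in dimension n (2^n pairwise non-overlapping cubes). Then for every coordinate j and every parameter t occurring in coordinate j, the number of cubes whose j-th coordinate equals t is equal to the number of cubes whose j-th coordinate equals t+1. -/
section
variable {M : ℕ}

lemma negM_eq (hM : 0 < M) : -(M : ZMod (2*M)) = (M : ZMod (2*M)) := by
  have h : (M : ZMod (2*M)) + M = 0 := by
    rw [← Nat.cast_add]
    have e : M + M = 2*M := by omega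
    rw [e, ZMod.natCast_self]
  linear_combination -h

lemma neg_one_eq (hM : 0 < M) : (-1 : ZMod (2*M)) = ((2*M - 1 : ℕ) : ZMod (2*M)) := by
  have h : (((2*M - 1) + 1 : ℕ) : ZMod (2*M)) = 0 := by
    rw [show 2*M - 1 + 1 = 2*M from by omega, ZMod.natCast_self]
  push_cast at h
  linear_combination -h

lemma val_M (hM : 0 < M) : (M : ZMod (2*M)).val = M := by
  rw [ZMod.val_natCast]; exact Nat.mod_eq_of_lt (by omega)

lemma no_both (hM : 0 < M) (v : ZMod (2*M)) (h1 : v.val < M) (h2 : (v + M).val < M) : False := by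
  haveI : NeZero (2*M) := ⟨by omega⟩
  rw [ZMod.val_add, val_M hM, Nat.mod_eq_of_lt (by omega)] at h2
  omega

lemma shift_iff (hM : 0 < M) (u : ZMod (2*M)) (h0 : u ≠ 0) (hMne : u ≠ (M : ZMod (2*M))) :
    ((u - 1).val < M ↔ u.val < M) := by
  haveI : NeZero (2*M) := ⟨by omega⟩
  have hv0 : u.val ≠ 0 := fun h => h0 (by rwa [ZMod.val_eq_zero] at h)
  have hvM : u.val ≠ M := by
    intro h
    exact hMne (ZMod.val_injective _ (by rw [h, val_M hM]))
  have hlt : u.val < 2*M := ZMod.val_lt u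
  have hcast : ((u.val : ℕ) : ZMod (2*M)) = u := ZMod.natCast_rightInverse u
  have hsub : (u - 1).val = u.val - 1 := by
    have e : u - 1 = ((u.val - 1 : ℕ) : ZMod (2*M)) := by
      rw [Nat.cast_sub (by omega), hcast, Nat.cast_one]
    rw [e, ZMod.val_cast_of_lt (by omega)]
  omega

def ivl (M : ℕ) [NeZero (2*M)] (s : ZMod (2*M)) : Finset (ZMod (2*M)) :=
  Finset.univ.filter (fun c => (c - s).val < M)

lemma mem_ivl [NeZero (2*M)] {s c : ZMod (2*M)} : c ∈ ivl M s ↔ (c - s).val < M := by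
  simp [ivl]

lemma card_ivl [NeZero (2*M)] (hM : 0 < M) (s : ZMod (2*M)) : (ivl M s).card = M := by
  have himg : ivl M s = Finset.image (fun k : Fin M => s + ((k : ℕ) : ZMod (2*M))) Finset.univ := by
    ext c
    simp only [mem_ivl, Finset.mem_image, Finset.mem_univ, true_and]
    constructor
    · intro h
      refine ⟨⟨(c - s).val, h⟩, ?_⟩
      simp [ZMod.natCast_rightInverse (c - s)]
    · rintro ⟨k, rfl⟩
      have : ((k : ℕ) : ZMod (2*M)).val = (k : ℕ) := ZMod.val_cast_of_lt (by have := k.2; omega)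
      simpa [this] using k.2
  rw [himg, Finset.card_image_of_injective _ ?_, Finset.card_univ, Fintype.card_fin]
  intro k k' h
  have h2 : ((k : ℕ) : ZMod (2*M)) = ((k' : ℕ) : ZMod (2*M)) := by
    have := add_left_cancel h; exact this
  have e := congrArg ZMod.val h2
  rw [ZMod.val_cast_of_lt (by have := k.2; omega), ZMod.val_cast_of_lt (by have := k'.2; omega)] at e
  exact Fin.ext e

lemma slice_card {n : ℕ} {β : Type*} [DecidableEq β] (f : Fin n → Finset β) (j : Fin n) (c : β) :
    ((Fintype.piFinset f).filter (fun x => x j = c)).card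
      = (if c ∈ f j then 1 else 0) * ∏ j' ∈ Finset.univ.erase j, (f j').card := by
  have he : (Fintype.piFinset f).filter (fun x => x j = c)
      = Fintype.piFinset (fun j' => if j' = j then (f j).filter (fun z => z = c) else f j') := by
    ext x
    simp only [Finset.mem_filter, Fintype.mem_piFinset]
    constructor
    · rintro ⟨h, hc⟩ j'
      by_cases hj : j' = j
      · subst hj; rw [if_pos rfl, Finset.mem_filter]; exact ⟨h j', hc⟩
      · simp [hj, h j']
    · intro h
      constructor
      · intro j'
        have := h j'
        by_cases hj : j' = j
        · subst hj; simp at this; exact this.1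
        · simpa [hj] using this
      · have := h j
        simp at this
        exact this.2
  rw [he, Fintype.card_piFinset]
  rw [← Finset.prod_erase_mul _ _ (Finset.mem_univ j)]
  rw [mul_comm]
  congr 1
  · simp only [if_pos rfl]
    by_cases hc : c ∈ f j
    · rw [if_pos hc, Finset.filter_eq']
      simp [hc]
    · rw [if_neg hc, Finset.filter_eq']
      simp [hc]
  · apply Finset.prod_congr rfl
    intro j' hj'
    rw [if_neg (Finset.ne_of_mem_erase hj')]

theorem key {n : ℕ} {α : Type*} [DecidableEq α] (hM : 0 < M)
    (G : Fin (2 ^ n) → Fin n → α × Bool) (hpack : IsPacking G)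
    (j : Fin n) (t : α) (P : α → ℕ)
    (hlt : ∀ i, P (G i j).1 < M) (hlt_t : P t < M)
    (hinj : ∀ i, P (G i j).1 = P t → (G i j).1 = t) :
    (Finset.univ.filter (fun i => G i j = (t, false))).card =
    (Finset.univ.filter (fun i => G i j = (t, true))).card := by
  haveI : NeZero (2*M) := ⟨by omega⟩
  set st : α × Bool → ZMod (2*M) :=
    fun p => ((P p.1 + if p.2 then M else 0 : ℕ) : ZMod (2*M)) with hst
  set cube : Fin (2^n) → Finset (Fin n → ZMod (2*M)) :=
    fun i => Fintype.piFinset (fun j' => ivl M (st (G i j'))) with hcube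
  -- disjointness
  have hdisj : ∀ i i', i ≠ i' → Disjoint (cube i) (cube i') := by
    intro i i' hne
    obtain ⟨j₀, ha, hb⟩ := hpack i i' hne
    rw [Finset.disjoint_left]
    intro x hx hx'
    have h1 : (x j₀ - st (G i j₀)).val < M := mem_ivl.mp (Fintype.mem_piFinset.mp hx j₀)
    have h2 : (x j₀ - st (G i' j₀)).val < M := mem_ivl.mp (Fintype.mem_piFinset.mp hx' j₀)
    have hMM : ∀ a : α, st (a, true) = st (a, false) + (M : ZMod (2*M)) := by
      intro a; simp only [hst]; push_cast; ring
    rcases hb1 : (G i j₀).2 <;> rcases hb2 : (G i' j₀).2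
    · exact hb (by rw [hb1, hb2])
    · -- i has false, i' has true
      rw [show G i' j₀ = ((G i j₀).1, true) by rw [ha, ← hb2], hMM,
        show ((G i j₀).1, false) = G i j₀ by rw [← hb1]] at h2
      have e : x j₀ - (st (G i j₀) + (M : ZMod (2*M))) = (x j₀ - st (G i j₀)) + M := by
        conv_rhs => rw [← negM_eq hM]
        ring
      rw [e] at h2
      exact no_both hM _ h1 h2
    · rw [show G i j₀ = ((G i' j₀).1, true) by rw [← ha, ← hb1], hMM,
        show ((G i' j₀).1, false) = G i' j₀ by rw [← hb2]] at h1
      have e : x j₀ - (st (G i' j₀) + (M : ZMod (2*M))) = (x j₀ - st (G i' j₀)) + M := by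
        conv_rhs => rw [← negM_eq hM]
        ring
      rw [e] at h1
      exact no_both hM _ h2 h1
    · exact hb (by rw [hb1, hb2])
  have hcards : ∀ i, (cube i).card = M ^ n := by
    intro i
    rw [hcube]
    rw [Fintype.card_piFinset]
    rw [Finset.prod_congr rfl (fun j' _ => card_ivl hM (st (G i j')))]
    simp
  have hcover : Finset.univ.biUnion cube = Finset.univ := by
    apply Finset.eq_univ_of_card
    rw [Finset.card_biUnion (fun x _ y _ h => hdisj x y h)]
    have : ∑ i : Fin (2^n), (cube i).card = 2^n * M^n := by
      rw [Finset.sum_congr rfl (fun i _ => hcards i)]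
      simp [mul_comm]
    rw [this]
    have : Fintype.card (Fin n → ZMod (2*M)) = (2*M)^n := by
      rw [Fintype.card_fun, ZMod.card, Fintype.card_fin]
    rw [this, mul_pow]
  have herase : (Finset.univ.erase j).card = n - 1 := by
    rw [Finset.card_erase_of_mem (Finset.mem_univ j), Finset.card_univ, Fintype.card_fin]
  have key_slice : ∀ c : ZMod (2*M),
      (Finset.univ.filter (fun i => (c - st (G i j)).val < M)).card = 2^(n-1) := by
    intro c
    have h1 : ∑ i : Fin (2^n), ((cube i).filter (fun x => x j = c)).card
        = (Finset.univ.filter (fun x : Fin n → ZMod (2*M) => x j = c)).card := by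
      conv_rhs => rw [← hcover]
      rw [Finset.filter_biUnion, Finset.card_biUnion]
      intro x _ y _ hxy
      exact Finset.disjoint_filter_filter (hdisj x y hxy)
    have h2 : ∀ i, ((cube i).filter (fun x => x j = c)).card
        = (if (c - st (G i j)).val < M then 1 else 0) * M^(n-1) := by
      intro i
      rw [hcube, slice_card]
      congr 1
      · exact if_congr mem_ivl rfl rfl
      · rw [Finset.prod_congr rfl (fun j' _ => card_ivl hM (st (G i j'))), Finset.prod_const, herase]
    have h3 : (Finset.univ.filter (fun x : Fin n → ZMod (2*M) => x j = c)).card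
        = 2^(n-1) * M^(n-1) := by
      rw [← Fintype.piFinset_univ, slice_card]
      simp only [Finset.mem_univ, if_pos]
      rw [Finset.prod_const, herase, Finset.card_univ, ZMod.card, mul_pow]
      ring
    rw [Finset.sum_congr rfl (fun i _ => h2 i), ← Finset.sum_mul, h3] at h1
    have hpos : 0 < M^(n-1) := pow_pos hM _
    have := Nat.eq_of_mul_eq_mul_right hpos h1
    rw [← this, Finset.card_filter]
  -- pointwise identity
  have hpt : ((P t : ℕ) : ZMod (2*M)).val = P t := ZMod.val_cast_of_lt (by omega)
  have hpoint : ∀ i : Fin (2^n),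
      (if (((P t : ℕ) : ZMod (2*M)) - st (G i j)).val < M then 1 else 0)
        + (if G i j = (t, true) then 1 else 0)
      = (if (((P t : ℕ) : ZMod (2*M)) - 1 - st (G i j)).val < M then 1 else 0)
        + (if G i j = (t, false) then 1 else 0) := by
    intro i
    have hlti : P (G i j).1 < M := hlt i
    rcases hGij : G i j with ⟨a, b⟩
    have hlta : P a < M := by
      have h := hlt i; rw [hGij] at h; simpa using h
    by_cases hat : a = t
    · subst hat
      cases b
      · -- (a, false)
        have e1 : (((P a : ℕ) : ZMod (2*M)) - st (a, false)) = 0 := by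
          simp only [hst]; push_cast; ring
        have e2 : (((P a : ℕ) : ZMod (2*M)) - 1 - st (a, false)) = -1 := by
          simp only [hst]; push_cast; ring
        rw [e1, e2, neg_one_eq hM, ZMod.val_cast_of_lt (by omega)]
        simp [ZMod.val_zero, hM, show ¬(2*M - 1 < M) from by omega]
      · -- (a, true)
        have e1 : (((P a : ℕ) : ZMod (2*M)) - st (a, true)) = (M : ZMod (2*M)) := by
          simp only [hst]
          rw [← negM_eq hM]
          push_cast; ring
        have e2 : (((P a : ℕ) : ZMod (2*M)) - 1 - st (a, true)) = ((M - 1 : ℕ) : ZMod (2*M)) := by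
          simp only [hst]
          have h0 : (((M - 1) + (M + 1) : ℕ) : ZMod (2*M)) = 0 := by
            rw [show M - 1 + (M + 1) = 2*M from by omega, ZMod.natCast_self]
          push_cast at h0 ⊢
          linear_combination -h0
        rw [e1, e2, val_M hM, ZMod.val_cast_of_lt (by omega)]
        simp [show M - 1 < M from by omega, lt_irrefl]
    · -- a ≠ t
      have hsv : (st (a, b)).val = P a + if b then M else 0 := by
        simp only [hst]
        exact ZMod.val_cast_of_lt (by cases b <;> simp <;> omega)
      have h0 : (((P t : ℕ) : ZMod (2*M)) - st (a, b)) ≠ 0 := by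
        intro h
        have : ((P t : ℕ) : ZMod (2*M)) = st (a, b) := by
          have := sub_eq_zero.mp h; exact this
        have hv := congrArg ZMod.val this
        rw [hpt, hsv] at hv
        cases b
        · simp at hv
          have h := hinj i (by rw [hGij]; exact hv.symm)
          rw [hGij] at h
          exact hat h
        · simp at hv; omega
      have hMne : (((P t : ℕ) : ZMod (2*M)) - st (a, b)) ≠ (M : ZMod (2*M)) := by
        intro h
        have h' : ((P t : ℕ) : ZMod (2*M)) = st (a, b) + M := by
          linear_combination h
        cases b
        · have : st (a, false) + (M : ZMod (2*M)) = ((P a + M : ℕ) : ZMod (2*M)) := by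
            simp only [hst]; push_cast; ring
          rw [this] at h'
          have hv := congrArg ZMod.val h'
          rw [hpt, ZMod.val_cast_of_lt (by omega)] at hv
          omega
        · have : st (a, true) + (M : ZMod (2*M)) = ((P a : ℕ) : ZMod (2*M)) := by
            simp only [hst]
            have hz : ((2*M : ℕ) : ZMod (2*M)) = 0 := ZMod.natCast_self _
            push_cast at hz ⊢
            linear_combination hz
          rw [this] at h'
          have hv := congrArg ZMod.val h'
          rw [hpt, ZMod.val_cast_of_lt (by omega)] at hv
          have h := hinj i (by rw [hGij]; exact hv.symm)
          rw [hGij] at h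
          exact hat h
      have e : (((P t : ℕ) : ZMod (2*M)) - 1 - st (a, b))
          = (((P t : ℕ) : ZMod (2*M)) - st (a, b)) - 1 := by ring
      rw [e, if_congr (shift_iff hM _ h0 hMne) rfl rfl]
      simp [hat]
  -- sum it up
  have hsum := Finset.sum_congr rfl (fun i (_ : i ∈ Finset.univ) => hpoint i)
  rw [Finset.sum_add_distrib, Finset.sum_add_distrib,
    ← Finset.card_filter, ← Finset.card_filter, ← Finset.card_filter, ← Finset.card_filter,
    key_slice, key_slice] at hsum
  omega
end
/-- In a combinatorial torus cube tiling (`2^n` pairwise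
non-overlapping cubes), for each coordinate `j` and each parameter `t`,
the number of cubes carrying `t` in coordinate `j` equals the number of
cubes carrying `t+1` there. -/
theorem stmt_9 {n : ℕ} {α : Type*} [DecidableEq α]
    (G : Fin (2 ^ n) → Fin n → α × Bool) (hpack : IsPacking G) :
    ∀ (j : Fin n) (t : α),
      (Finset.univ.filter (fun i => G i j = (t, false))).card =
      (Finset.univ.filter (fun i => G i j = (t, true))).card := by
  intro j t
  classical
  set S : Finset α := insert t (Finset.univ.image (fun i => (G i j).1)) with hS
  set l := S.toList with hl
  have hmem : ∀ a, a ∈ S → a ∈ l := fun a ha => by rwa [hl, Finset.mem_toList]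
  have hlen : l.length ≤ 2^n + 1 := by
    rw [hl, Finset.length_toList, hS]
    calc (insert t (Finset.univ.image (fun i => (G i j).1))).card
        ≤ (Finset.univ.image (fun i => (G i j).1)).card + 1 := Finset.card_insert_le _ _
      _ ≤ Finset.univ.card + 1 := by
          have := Finset.card_image_le (s := (Finset.univ : Finset (Fin (2^n))))
            (f := fun i => (G i j).1)
          omega
      _ = 2^n + 1 := by rw [Finset.card_univ, Fintype.card_fin]
  have htS : t ∈ S := by rw [hS]; exact Finset.mem_insert_self _ _
  have hGS : ∀ i, (G i j).1 ∈ S := fun i => by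
    rw [hS]
    exact Finset.mem_insert_of_mem (Finset.mem_image_of_mem _ (Finset.mem_univ i))
  refine key (M := 2^n + 2) (by positivity) G hpack j t (fun a => List.idxOf a l) ?_ ?_ ?_
  · intro i
    show List.idxOf (G i j).1 l < 2^n + 2
    have h := List.idxOf_lt_length_iff.mpr (hmem _ (hGS i))
    omega
  · show List.idxOf t l < 2^n + 2
    have h := List.idxOf_lt_length_iff.mpr (hmem _ htS)
    omega
  · intro i h
    exact (List.idxOf_inj (hmem _ (hGS i))).mp h
end

section
/- With G, G' combinatorial torus cube packings of dimensions n, n', the twisted product G ⋉ G' is extensible if and only if G is extensible or G' is extensible. Equivalently, G ⋉ G' is non-extensible if and only if both G and G' are non-extensible. -/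
def twisted {n n' m m' : ℕ} {α β : Type*}
    (G : Fin m → Fin n → α × Bool) (G' : Fin m' → Fin n' → β × Bool) :
    Fin m × Fin m' → Fin (n + n') → (α ⊕ Fin m × β) × Bool :=
  fun p k =>
    Fin.addCases (motive := fun _ => (α ⊕ Fin m × β) × Bool)
      (fun j => ((Sum.inl (G p.1 j).1), (G p.1 j).2))
      (fun j => ((Sum.inr (p.1, (G' p.2 j).1)), (G' p.2 j).2)) k

/-- The twisted product `G ⋉ G'` admits an additional
non-overlapping cube iff `G` does or `G'` does. -/
theorem stmt_11 {n n' m m' : ℕ} {α β : Type*}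
    (G : Fin m → Fin n → α × Bool) (G' : Fin m' → Fin n' → β × Bool)
    (hG : IsPacking G) (hG' : IsPacking G') :
    Addable (twisted G G') ↔ Addable G ∨ Addable G' := by
  constructor
  · rintro ⟨c, hc⟩
    by_cases hall : ∀ i : Fin m, ∃ k : Fin n,
        (c (Fin.castAdd n' k)).1 = Sum.inl (Sum.inl (G i k).1) ∧
        (c (Fin.castAdd n' k)).2 ≠ (G i k).2
    · left
      refine ⟨fun k => ((match (c (Fin.castAdd n' k)).1 with
        | Sum.inl (Sum.inl a) => Sum.inl a
        | _ => Sum.inr 0), (c (Fin.castAdd n' k)).2), ?_⟩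
      intro i
      obtain ⟨k, h1, h2⟩ := hall i
      exact ⟨k, by simp [h1], h2⟩
    · right
      push_neg at hall
      obtain ⟨i0, hi0⟩ := hall
      refine ⟨fun k => ((match (c (Fin.natAdd n k)).1 with
        | Sum.inl (Sum.inr (_, b)) => Sum.inl b
        | _ => Sum.inr 0), (c (Fin.natAdd n k)).2), ?_⟩
      intro j
      obtain ⟨k, h1, h2⟩ := hc (i0, j)
      revert h1 h2
      induction k using Fin.addCases with
      | left k =>
        intro h1 h2
        simp only [twisted, Fin.addCases_left] at h1 h2
        exact absurd (hi0 k h1) h2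
      | right k =>
        intro h1 h2
        simp only [twisted, Fin.addCases_right] at h1 h2
        exact ⟨k, by simp [h1], h2⟩
  · rintro (⟨c, hc⟩ | ⟨c, hc⟩)
    · refine ⟨Fin.addCases (motive := fun _ => ((α ⊕ Fin m × β) ⊕ ℕ) × Bool)
        (fun k => (Sum.elim (fun a => Sum.inl (Sum.inl a)) Sum.inr (c k).1, (c k).2))
        (fun _ => (Sum.inr 0, true)), ?_⟩
      rintro ⟨i, j⟩
      obtain ⟨k, h1, h2⟩ := hc i
      refine ⟨Fin.castAdd n' k, ?_, ?_⟩
      · simp [twisted, Fin.addCases_left, h1]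
      · simpa [twisted, Fin.addCases_left] using h2
    · rcases Nat.eq_zero_or_pos m with hm | hm
      · subst hm
        exact ⟨fun _ => (Sum.inr 0, true), fun p => p.1.elim0⟩
      · set i0 : Fin m := ⟨0, hm⟩ with hi0
        refine ⟨Fin.addCases (motive := fun _ => ((α ⊕ Fin m × β) ⊕ ℕ) × Bool)
          (fun k => (Sum.inl (Sum.inl (G i0 k).1), (G i0 k).2))
          (fun k => (Sum.elim (fun b => Sum.inl (Sum.inr (i0, b))) Sum.inr (c k).1,
            (c k).2)), ?_⟩
        rintro ⟨i, j⟩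
        by_cases hi : i = i0
        · subst hi
          obtain ⟨k, h1, h2⟩ := hc j
          refine ⟨Fin.natAdd n k, ?_, ?_⟩
          · simp [twisted, Fin.addCases_right, h1]
          · simpa [twisted, Fin.addCases_right] using h2
        · obtain ⟨k, h1, h2⟩ := hG i0 i (Ne.symm hi)
          refine ⟨Fin.castAdd n' k, ?_, ?_⟩
          · simp [twisted, Fin.addCases_left, h1]
          · simpa [twisted, Fin.addCases_left] using h2
end

section
/- Let f(n) denote the minimal number of cubes of a non-extensible combinatorial torus cube packing in dimension n (set f(n) = 2^n if none exists). Then f is submultiplicative: f(n+m) ≤ f(n)·f(m) for all n, m ≥ 1 for which non-extensible packings exist in dimensions n and m. -/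
/-- The minimal number of cubes of a non-extensible combinatorial torus cube
packing in dimension `n` (equal to `2^n` if none exists). -/
noncomputable def fT (n : ℕ) : ℕ :=
  sInf ({m | ∃ G : Fin m → Fin n → ℕ × Bool,
          IsPacking G ∧ m < 2 ^ n ∧ ¬ Addable G} ∪ {2 ^ n})

/-- The twisted product packing of the two packings `G`, `G'`. -/
def twistedProd {a b n m : ℕ} (G : Fin a → Fin n → ℕ × Bool)
    (G' : Fin b → Fin m → ℕ × Bool) : Fin (a * b) → Fin (n + m) → ℕ × Bool :=
  fun k => Fin.append (G (finProdFinEquiv.symm k).1) (G' (finProdFinEquiv.symm k).2)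

lemma twistedProd_isPacking {a b n m : ℕ} {G : Fin a → Fin n → ℕ × Bool}
    {G' : Fin b → Fin m → ℕ × Bool} (hG : IsPacking G) (hG' : IsPacking G') :
    IsPacking (twistedProd G G') := by
  intro k k' hne
  have hp : finProdFinEquiv.symm k ≠ finProdFinEquiv.symm k' :=
    fun h => hne (finProdFinEquiv.symm.injective h)
  by_cases h1 : (finProdFinEquiv.symm k).1 = (finProdFinEquiv.symm k').1
  · have h2 : (finProdFinEquiv.symm k).2 ≠ (finProdFinEquiv.symm k').2 :=
      fun h2 => hp (Prod.ext h1 h2)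
    obtain ⟨j, hj1, hj2⟩ := hG' _ _ h2
    exact ⟨Fin.natAdd n j, by simpa [twistedProd, Fin.append_right] using ⟨hj1, hj2⟩⟩
  · obtain ⟨j, hj1, hj2⟩ := hG _ _ h1
    exact ⟨Fin.castAdd m j, by simpa [twistedProd, Fin.append_left] using ⟨hj1, hj2⟩⟩

lemma twistedProd_not_addable {a b n m : ℕ} {G : Fin a → Fin n → ℕ × Bool}
    {G' : Fin b → Fin m → ℕ × Bool} (hG : ¬ Addable G) (hG' : ¬ Addable G') :
    ¬ Addable (twistedProd G G') := by
  rintro ⟨c, hc⟩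
  by_cases hcase : ∀ i : Fin a, ∃ j : Fin n,
      (c (Fin.castAdd m j)).1 = Sum.inl (G i j).1 ∧ (c (Fin.castAdd m j)).2 ≠ (G i j).2
  · exact hG ⟨fun j => c (Fin.castAdd m j), hcase⟩
  · push_neg at hcase
    obtain ⟨i₀, hi₀⟩ := hcase
    refine hG' ⟨fun j => c (Fin.natAdd n j), fun i' => ?_⟩
    obtain ⟨j, hj1, hj2⟩ := hc (finProdFinEquiv (i₀, i'))
    simp only [twistedProd, Equiv.symm_apply_apply] at hj1 hj2
    by_cases hjn : (j : ℕ) < n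
    · exfalso
      have hrw : j = Fin.castAdd m ⟨(j : ℕ), hjn⟩ := by ext; rfl
      rw [hrw, Fin.append_left] at hj1 hj2
      exact hj2 (hi₀ ⟨(j : ℕ), hjn⟩ hj1)
    · have hjm : (j : ℕ) - n < m := by have := j.isLt; omega
      have hrw : j = Fin.natAdd n ⟨(j : ℕ) - n, hjm⟩ := by
        ext; simp; omega
      rw [hrw, Fin.append_right] at hj1 hj2
      exact ⟨⟨(j : ℕ) - n, hjm⟩, hj1, hj2⟩

lemma fT_spec (n : ℕ)
    (hex : ∃ (k : ℕ) (G : Fin k → Fin n → ℕ × Bool),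
      IsPacking G ∧ k < 2 ^ n ∧ ¬ Addable G) :
    ∃ G : Fin (fT n) → Fin n → ℕ × Bool,
      IsPacking G ∧ fT n < 2 ^ n ∧ ¬ Addable G := by
  obtain ⟨k, G, hG, hk, hadd⟩ := hex
  have hkS : k ∈ ({m | ∃ G : Fin m → Fin n → ℕ × Bool,
      IsPacking G ∧ m < 2 ^ n ∧ ¬ Addable G} ∪ {2 ^ n}) := Or.inl ⟨G, hG, hk, hadd⟩
  have hle : fT n ≤ k := Nat.sInf_le hkS
  have hlt : fT n < 2 ^ n := lt_of_le_of_lt hle hk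
  have hmem : fT n ∈ ({m | ∃ G : Fin m → Fin n → ℕ × Bool,
      IsPacking G ∧ m < 2 ^ n ∧ ¬ Addable G} ∪ {2 ^ n}) :=
    Nat.sInf_mem ⟨k, hkS⟩
  rcases hmem with h | h
  · obtain ⟨G', hG', _, hadd'⟩ := h
    exact ⟨G', hG', hlt, hadd'⟩
  · exact absurd h (by simpa using hlt.ne)

lemma fT_pos {n k : ℕ} (G : Fin k → Fin n → ℕ × Bool) (hadd : ¬ Addable G) :
    0 < k := by
  rcases Nat.eq_zero_or_pos k with h | h
  · subst h
    exact absurd ⟨fun _ => (Sum.inr 0, true), fun i => i.elim0⟩ hadd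
  · exact h

/-- `fT` is submultiplicative: `fT (n+m) ≤ fT n · fT m`, for
dimensions `n, m ≥ 1` in which non-extensible packings exist. -/
theorem stmt_12 (n m : ℕ) (hn : 1 ≤ n) (hm : 1 ≤ m)
    (hex_n : ∃ (k : ℕ) (G : Fin k → Fin n → ℕ × Bool),
      IsPacking G ∧ k < 2 ^ n ∧ ¬ Addable G)
    (hex_m : ∃ (k : ℕ) (G : Fin k → Fin m → ℕ × Bool),
      IsPacking G ∧ k < 2 ^ m ∧ ¬ Addable G) :
    fT (n + m) ≤ fT n * fT m := by
  obtain ⟨G, hG, hltn, haddG⟩ := fT_spec n hex_n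
  obtain ⟨G', hG', hltm, haddG'⟩ := fT_spec m hex_m
  have hb : 0 < fT m := fT_pos G' haddG'
  have hsize : fT n * fT m < 2 ^ (n + m) := by
    calc fT n * fT m < 2 ^ n * 2 ^ m :=
          Nat.mul_lt_mul_of_lt_of_le hltn (le_of_lt hltm) (by positivity)
      _ = 2 ^ (n + m) := (pow_add 2 n m).symm
  exact Nat.sInf_le (Or.inl ⟨twistedProd G G',
    twistedProd_isPacking hG hG', hsize, twistedProd_not_addable haddG haddG'⟩)
end

section
/- Let G be a non-extensible combinatorial torus cube packing in dimension n, obtained by sequentially adding cubes C^1, C^2, ..., C^m such that each newly added cube introduces the maximal possible number of new parameters at each step (a 'strictly positive probability' path). Let N_k denote the number of steps at which exactly k new parameters were introduced. Then N_n = 1, N_{n-1} = 1, and N_k ≥ 1 for every k with 0 ≤ k ≤ n. -/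
/-- Number of fresh parameters introduced by the `i`-th cube of the sequence:
coordinates whose parameter does not occur in any earlier cube. -/
def newCount {m n : ℕ} (C : Fin m → Fin n → ℕ × Bool) (i : Fin m) : ℕ :=
  (Finset.univ.filter
    (fun j : Fin n => ∀ i' : Fin m, i' < i → (C i' j).1 ≠ (C i j).1)).card

/-- The sequence is a 'strictly positive probability' path: each added cube
maximizes the number of fresh parameters among all cubes addable at that
step. -/
def Greedy {m n : ℕ} (C : Fin m → Fin n → ℕ × Bool) : Prop :=
  ∀ (i : Fin m) (c : Fin n → ℕ × Bool),
    (∀ i' : Fin m, i' < i → ∃ j, (c j).1 = (C i' j).1 ∧ (c j).2 ≠ (C i' j).2) →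
    (Finset.univ.filter
      (fun j : Fin n => ∀ i' : Fin m, i' < i → (C i' j).1 ≠ (c j).1)).card
      ≤ newCount C i

/-- Along a maximal-fresh-parameter path building a
non-extensible packing, `N_n = 1`, `N_{n-1} = 1` and `N_k ≥ 1` for all
`0 ≤ k ≤ n`, where `N_k` counts the steps introducing exactly `k` fresh
parameters. -/
theorem stmt_13 {m n : ℕ} (hn : 1 ≤ n) (C : Fin m → Fin n → ℕ × Bool)
    (hpack : IsPacking C) (hsmall : m < 2 ^ n) (hnonext : ¬ Addable C)
    (hgreedy : Greedy C) :
    (Finset.univ.filter (fun i => newCount C i = n)).card = 1 ∧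
    (Finset.univ.filter (fun i => newCount C i = n - 1)).card = 1 ∧
    ∀ k ≤ n, 1 ≤ (Finset.univ.filter (fun i => newCount C i = k)).card := by
  classical
  -- m ≥ 1
  have hm1 : 0 < m := by
    rcases Nat.eq_zero_or_pos m with h | h
    · exfalso; apply hnonext; subst h
      exact ⟨fun _ => (Sum.inr 0, true), fun i => i.elim0⟩
    · exact h
  -- m ≥ 2
  have hm2 : 2 ≤ m := by
    rcases Nat.lt_or_ge m 2 with h | h
    · exfalso
      have hm : m = 1 := by omega
      subst hm
      apply hnonext
      refine ⟨fun j => (Sum.inl (C 0 j).1, !(C 0 j).2), ?_⟩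
      intro i
      have hi0 : i = 0 := Subsingleton.elim i 0
      subst hi0
      exact ⟨⟨0, hn⟩, rfl, by simp⟩
    · exact h
  -- n ≥ 2
  have hn2 : 2 ≤ n := by
    by_contra h
    have hn1 : n = 1 := by omega
    subst hn1
    omega
  set i0 : Fin m := ⟨0, hm1⟩ with hi0def
  set i1 : Fin m := ⟨1, hm2⟩ with hi1def
  have hi0v : i0.val = 0 := rfl
  have hi1v : i1.val = 1 := rfl
  -- newCount at step 0 is n
  have h0 : newCount C i0 = n := by
    unfold newCount
    rw [Finset.filter_true_of_mem, Finset.card_univ, Fintype.card_fin]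
    intro j _ i' hi'
    exfalso
    have : i'.val < 0 := hi'
    omega
  -- any index other than 0 has newCount < n
  have hlt : ∀ i : Fin m, i ≠ i0 → newCount C i < n := by
    intro i hi
    have h0i : i0 < i := by
      have : i.val ≠ 0 := fun h => hi (Fin.ext h)
      exact (Fin.lt_def).mpr (by omega)
    obtain ⟨j, hj1, _⟩ := hpack i0 i (ne_of_lt h0i)
    have hjnot : j ∉ Finset.univ.filter
        (fun j : Fin n => ∀ i' : Fin m, i' < i → (C i' j).1 ≠ (C i j).1) := by
      simp only [Finset.mem_filter, Finset.mem_univ, true_and]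
      push_neg
      exact ⟨i0, h0i, hj1⟩
    have hss : Finset.univ.filter
        (fun j : Fin n => ∀ i' : Fin m, i' < i → (C i' j).1 ≠ (C i j).1) ⊂ Finset.univ :=
      (Finset.ssubset_iff_of_subset (Finset.filter_subset _ _)).mpr
        ⟨j, Finset.mem_univ j, hjnot⟩
    have := Finset.card_lt_card hss
    simpa [newCount, Finset.card_univ] using this
  -- monotonicity of newCount
  have hmono : ∀ a b : Fin m, a ≤ b → newCount C b ≤ newCount C a := by
    intro a b hab
    rcases eq_or_lt_of_le hab with h | h
    · rw [h]
    · have h1 := hgreedy a (C b) (fun i' hi' => hpack b i' (ne_of_gt (lt_trans hi' h)))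
      refine le_trans ?_ h1
      apply Finset.card_le_card
      intro j hj
      simp only [Finset.mem_filter, Finset.mem_univ, true_and] at hj ⊢
      exact fun i' hi' => hj i' (lt_trans hi' h)
  -- a parameter that never occurs
  obtain ⟨B, hB⟩ : ∃ B : ℕ, ∀ (a : Fin m) (j : Fin n), (C a j).1 ≠ B := by
    refine ⟨(Finset.univ.sup fun p : Fin m × Fin n => (C p.1 p.2).1) + 1, fun a j => ?_⟩
    have : (C a j).1 ≤ Finset.univ.sup fun p : Fin m × Fin n => (C p.1 p.2).1 :=
      Finset.le_sup (f := fun p : Fin m × Fin n => (C p.1 p.2).1) (Finset.mem_univ (a, j))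
    omega
  -- key lemma
  have key : ∀ i : Fin m, 1 ≤ newCount C i →
      ∃ t : Fin m, i < t ∧ newCount C i - 1 ≤ newCount C t := by
    intro i hk
    set F := Finset.univ.filter
      (fun j : Fin n => ∀ i' : Fin m, i' < i → (C i' j).1 ≠ (C i j).1) with hF
    have hFcard : F.card = newCount C i := rfl
    obtain ⟨j1, hj1⟩ : ∃ j1, j1 ∈ F := Finset.card_pos.mp (by omega)
    set c : Fin n → ℕ × Bool := fun j =>
      if j ∈ F then (if j = j1 then ((C i j).1, !(C i j).2) else (B, true)) else C i j
      with hc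
    have hconf : ∀ i' : Fin m, i' ≤ i →
        ∃ j, (c j).1 = (C i' j).1 ∧ (c j).2 ≠ (C i' j).2 := by
      intro i' hi'
      rcases eq_or_lt_of_le hi' with h | h
      · subst h
        exact ⟨j1, by simp [hc, hj1], by simp [hc, hj1]⟩
      · obtain ⟨j, hja, hjb⟩ := hpack i i' (ne_of_gt h)
        have hjF : j ∉ F := by
          simp only [hF, Finset.mem_filter, Finset.mem_univ, true_and]
          push_neg
          exact ⟨i', h, hja.symm⟩
        exact ⟨j, by simp [hc, hjF, hja], by simp [hc, hjF]; exact hjb⟩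
    have hS : ∃ t : Fin m, ¬∃ j, (c j).1 = (C t j).1 ∧ (c j).2 ≠ (C t j).2 := by
      by_contra h
      push_neg at h
      apply hnonext
      refine ⟨fun j => (Sum.inl (c j).1, (c j).2), fun a => ?_⟩
      obtain ⟨j, hja, hjb⟩ := h a
      refine ⟨j, ?_, hjb⟩
      simp [hja]
    set S := Finset.univ.filter
      (fun t : Fin m => ¬∃ j, (c j).1 = (C t j).1 ∧ (c j).2 ≠ (C t j).2) with hSdef
    have hSne : S.Nonempty := by
      obtain ⟨t, ht⟩ := hS
      exact ⟨t, Finset.mem_filter.mpr ⟨Finset.mem_univ _, ht⟩⟩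
    set t := S.min' hSne with htdef
    have htS : t ∈ S := S.min'_mem hSne
    have hti : i < t := by
      rcases lt_or_ge i t with h | h
      · exact h
      · exact absurd (hconf t h) (Finset.mem_filter.mp htS).2
    have hprev : ∀ i' : Fin m, i' < t →
        ∃ j, (c j).1 = (C i' j).1 ∧ (c j).2 ≠ (C i' j).2 := by
      intro i' hi'
      by_contra h
      exact absurd (S.min'_le i' (Finset.mem_filter.mpr ⟨Finset.mem_univ _, h⟩))
        (not_le.mpr hi')
    have hg := hgreedy t c hprev
    refine ⟨t, hti, le_trans ?_ hg⟩
    have hsub : F.erase j1 ⊆ Finset.univ.filter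
        (fun j : Fin n => ∀ i' : Fin m, i' < t → (C i' j).1 ≠ (c j).1) := by
      intro j hj
      obtain ⟨hjne, hjF⟩ := Finset.mem_erase.mp hj
      have hcj : (c j).1 = B := by simp [hc, hjF, hjne]
      simp only [Finset.mem_filter, Finset.mem_univ, true_and]
      intro i' _
      rw [hcj]
      exact hB i' j
    calc newCount C i - 1 = (F.erase j1).card := by
          rw [Finset.card_erase_of_mem hj1, hFcard]
      _ ≤ _ := Finset.card_le_card hsub
  -- every k ≤ n is attained
  have attain : ∀ k ≤ n, ∃ i : Fin m, newCount C i = k := by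
    intro k hk
    rcases eq_or_lt_of_le hk with h | h
    · exact ⟨i0, by rw [h0, h]⟩
    · set T := Finset.univ.filter (fun i : Fin m => k + 1 ≤ newCount C i) with hT
      have hTne : T.Nonempty :=
        ⟨i0, Finset.mem_filter.mpr ⟨Finset.mem_univ _, by omega⟩⟩
      set i := T.max' hTne with hidef
      have hiT : k + 1 ≤ newCount C i := (Finset.mem_filter.mp (T.max'_mem hTne)).2
      obtain ⟨t, hti, htc⟩ := key i (by omega)
      have h1 : newCount C t ≤ k := by
        by_contra h'
        push_neg at h'
        exact absurd (T.le_max' t (Finset.mem_filter.mpr ⟨Finset.mem_univ _, h'⟩))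
          (not_le.mpr hti)
      exact ⟨t, by omega⟩
  -- newCount at step 1 is n - 1
  have h1eq : newCount C i1 = n - 1 := by
    have hup : newCount C i1 < n := hlt i1 (by simp [hi0def, hi1def, Fin.ext_iff])
    obtain ⟨t, hti, htc⟩ := key i0 (by omega)
    have h1t : i1 ≤ t := by
      have : (0 : ℕ) < t.val := hti
      exact (Fin.le_def).mpr (by omega)
    have := hmono i1 t h1t
    omega
  -- uniqueness for n - 1
  have huniq : ∀ i : Fin m, newCount C i = n - 1 → i = i1 := by
    intro i hi
    by_contra hne
    have hne0 : i ≠ i0 := by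
      intro h
      rw [h, h0] at hi
      omega
    have hival : 2 ≤ i.val := by
      have h1 : i.val ≠ 0 := fun h => hne0 (Fin.ext h)
      have h2 : i.val ≠ 1 := fun h => hne (Fin.ext h)
      omega
    have h0i : i0 < i := (Fin.lt_def).mpr (by omega)
    have h1i : i1 < i := (Fin.lt_def).mpr (by omega)
    have h01 : i0 < i1 := (Fin.lt_def).mpr (by omega)
    -- unique non-fresh coordinate of cube i
    set Fi := Finset.univ.filter
      (fun j : Fin n => ∀ i' : Fin m, i' < i → (C i' j).1 ≠ (C i j).1) with hFi
    have hFicard : Fi.card = n - 1 := hi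
    have hcompl : (Finset.univ \ Fi).card = 1 := by
      rw [Finset.card_sdiff_of_subset (Finset.subset_univ _), Finset.card_univ, Fintype.card_fin,
        hFicard]
      omega
    obtain ⟨jst, hjst⟩ := Finset.card_eq_one.mp hcompl
    have hmem : ∀ j : Fin n, j ∉ Fi → j = jst := by
      intro j hj
      have : j ∈ Finset.univ \ Fi := Finset.mem_sdiff.mpr ⟨Finset.mem_univ _, hj⟩
      rw [hjst] at this
      exact Finset.mem_singleton.mp this
    -- unique non-fresh coordinate of cube 1
    set F1 := Finset.univ.filter
      (fun j : Fin n => ∀ i' : Fin m, i' < i1 → (C i' j).1 ≠ (C i1 j).1) with hF1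
    have hF1card : F1.card = n - 1 := h1eq
    have hcompl1 : (Finset.univ \ F1).card = 1 := by
      rw [Finset.card_sdiff_of_subset (Finset.subset_univ _), Finset.card_univ, Fintype.card_fin,
        hF1card]
      omega
    obtain ⟨j1u, hj1u⟩ := Finset.card_eq_one.mp hcompl1
    have hmem1 : ∀ j : Fin n, j ∉ F1 → j = j1u := by
      intro j hj
      have : j ∈ Finset.univ \ F1 := Finset.mem_sdiff.mpr ⟨Finset.mem_univ _, hj⟩
      rw [hj1u] at this
      exact Finset.mem_singleton.mp this
    -- conflict of i with 0 must be at jst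
    obtain ⟨ja, hja1, hja2⟩ := hpack i i0 (ne_of_gt h0i)
    have hjaF : ja ∉ Fi := by
      simp only [hFi, Finset.mem_filter, Finset.mem_univ, true_and]
      push_neg
      exact ⟨i0, h0i, hja1.symm⟩
    have hjaeq : ja = jst := hmem ja hjaF
    subst hjaeq
    -- conflict of i with 1 must be at jst
    obtain ⟨jb, hjb1, hjb2⟩ := hpack i i1 (ne_of_gt h1i)
    have hjbF : jb ∉ Fi := by
      simp only [hFi, Finset.mem_filter, Finset.mem_univ, true_and]
      push_neg
      exact ⟨i1, h1i, hjb1.symm⟩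
    have hjbeq : jb = ja := hmem jb hjbF
    subst hjbeq
    -- cubes 0 and 1 share a parameter at jb with EQUAL booleans
    have hbool : (C i0 jb).2 = (C i1 jb).2 := by
      revert hja2 hjb2
      cases (C i jb).2 <;> cases (C i0 jb).2 <;> cases (C i1 jb).2 <;> simp
    have hpar01 : (C i1 jb).1 = (C i0 jb).1 := by rw [← hja1, ← hjb1]
    have hjbF1 : jb ∉ F1 := by
      simp only [hF1, Finset.mem_filter, Finset.mem_univ, true_and]
      push_neg
      exact ⟨i0, h01, hpar01.symm⟩
    have hjbj1u : jb = j1u := hmem1 jb hjbF1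
    -- but the conflict of cube 1 with cube 0 is at its unique non-fresh coord j1u = jb
    obtain ⟨jc, hjc1, hjc2⟩ := hpack i1 i0 (ne_of_gt h01)
    have hjcF1 : jc ∉ F1 := by
      simp only [hF1, Finset.mem_filter, Finset.mem_univ, true_and]
      push_neg
      exact ⟨i0, h01, hjc1.symm⟩
    have hjceq : jc = j1u := hmem1 jc hjcF1
    rw [hjceq, ← hjbj1u] at hjc2
    exact hjc2 hbool.symm
  refine ⟨?_, ?_, ?_⟩
  · -- N_n = 1
    have : Finset.univ.filter (fun i => newCount C i = n) = {i0} := by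
      ext i
      simp only [Finset.mem_filter, Finset.mem_univ, true_and, Finset.mem_singleton]
      constructor
      · intro h
        by_contra hne
        exact absurd h (ne_of_lt (hlt i hne))
      · intro h
        rw [h, h0]
    rw [this, Finset.card_singleton]
  · -- N_{n-1} = 1
    have : Finset.univ.filter (fun i => newCount C i = n - 1) = {i1} := by
      ext i
      simp only [Finset.mem_filter, Finset.mem_univ, true_and, Finset.mem_singleton]
      constructor
      · exact huniq i
      · intro h
        rw [h, h1eq]
    rw [this, Finset.card_singleton]
  · -- N_k ≥ 1
    intro k hk
    obtain ⟨i, hi⟩ := attain k hk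
    exact Finset.card_pos.mpr ⟨i, Finset.mem_filter.mpr ⟨Finset.mem_univ _, hi⟩⟩
end

section
/- Consider sequential random packing of cubes z+[0,1]^n with z ∈ (1/N)Z^n ∩ [0,1]^n into [0,2]^n (cubes must be pairwise non-overlapping: two cubes z+[0,1]^n, z'+[0,1]^n overlap unless there is a coordinate i with {z_i, z'_i} = {0,1}). Suppose the first cube z^1+[0,1]^n is placed and let I = {i : z^1_i ∈ {0,1}}. Then the minimal possible number of cubes in any maximal (non-extensible) packing containing z^1+[0,1]^n is exactly |I| + 1. -/
/-- Two grid cubes `z/N + [0,1]^n`, `z'/N + [0,1]^n` in `[0,2]^n` (numerators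
`z, z' ∈ {0,…,N}^n`) are non-overlapping iff in some coordinate one numerator
is `0` and the other is `N`. -/
def CubeNonOv (n N : ℕ) (z z' : Fin n → ℕ) : Prop :=
  ∃ i, (z i = 0 ∧ z' i = N) ∨ (z i = N ∧ z' i = 0)

/-- If the first cube `z¹` has `I = {i : z¹_i ∈ {0,N}}`, then
the minimal number of cubes of a maximal (non-extensible) packing of `[0,2]^n`
containing `z¹` is exactly `|I| + 1`. -/
theorem stmt_16 (n N : ℕ) (hN : 2 ≤ N) (z1 : Fin n → ℕ) (hz1 : ∀ i, z1 i ≤ N) :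
    (∀ P : Finset (Fin n → ℕ), z1 ∈ P → (∀ z ∈ P, ∀ i, z i ≤ N) →
      (∀ a ∈ P, ∀ b ∈ P, a ≠ b → CubeNonOv n N a b) →
      (¬ ∃ w : Fin n → ℕ, (∀ i, w i ≤ N) ∧ ∀ z ∈ P, CubeNonOv n N w z) →
      (Finset.univ.filter (fun i : Fin n => z1 i = 0 ∨ z1 i = N)).card + 1 ≤ P.card)
    ∧ (∃ P : Finset (Fin n → ℕ), z1 ∈ P ∧ (∀ z ∈ P, ∀ i, z i ≤ N) ∧
      (∀ a ∈ P, ∀ b ∈ P, a ≠ b → CubeNonOv n N a b) ∧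
      (¬ ∃ w : Fin n → ℕ, (∀ i, w i ≤ N) ∧ ∀ z ∈ P, CubeNonOv n N w z) ∧
      P.card = (Finset.univ.filter (fun i : Fin n => z1 i = 0 ∨ z1 i = N)).card + 1) := by
  classical
  set I : Finset (Fin n) :=
    Finset.univ.filter (fun i : Fin n => z1 i = 0 ∨ z1 i = N) with hIdef
  have hNne : N ≠ 0 := by omega
  have memI : ∀ i : Fin n, i ∈ I ↔ (z1 i = 0 ∨ z1 i = N) := by
    intro i; simp [hIdef]
  constructor
  · -- lower bound
    intro P hz1P _hbd hpack hmax
    by_contra hlt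
    push_neg at hlt
    have hPle : P.card ≤ I.card := by omega
    have hP1 : 1 ≤ P.card := Finset.card_pos.mpr ⟨z1, hz1P⟩
    have hIpos : 0 < I.card := by omega
    obtain ⟨i0, hi0⟩ := Finset.card_pos.mp hIpos
    -- choice function for opposition coordinate with z1
    set f : (Fin n → ℕ) → Fin n :=
      fun z => if h : CubeNonOv n N z z1 then h.choose else i0 with hfdef
    set B : Finset (Fin n) := (P.erase z1).image f with hBdef
    have hBcard : B.card < I.card := by
      have h1 : B.card ≤ (P.erase z1).card := Finset.card_image_le
      have h2 : (P.erase z1).card = P.card - 1 := Finset.card_erase_of_mem hz1P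
      omega
    have : ¬ I ⊆ B := fun hsub => absurd (Finset.card_le_card hsub) (by omega)
    rw [Finset.not_subset] at this
    obtain ⟨istar, histarI, histarB⟩ := this
    apply hmax
    refine ⟨Function.update z1 istar (N - z1 istar), ?_, ?_⟩
    · intro i
      by_cases h : i = istar
      · subst h; rw [Function.update_self]; exact Nat.sub_le N _
      · simp [Function.update_of_ne h]; exact hz1 i
    · intro z hz
      by_cases hzz1 : z = z1
      · subst hzz1
        refine ⟨istar, ?_⟩
        rcases (memI istar).mp histarI with h0 | hN'
        · right
          constructor
          · rw [Function.update_self, h0]; omega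
          · exact h0
        · left
          constructor
          · rw [Function.update_self, hN']; simp
          · exact hN'
      · have hcn : CubeNonOv n N z z1 := hpack z hz z1 hz1P hzz1
        have hfz : f z = hcn.choose := by
          rw [hfdef]; exact dif_pos hcn
        have hspec := hcn.choose_spec
        have hfB : f z ∈ B := by
          rw [hBdef]
          exact Finset.mem_image.mpr ⟨z, Finset.mem_erase.mpr ⟨hzz1, hz⟩, rfl⟩
        have hne : f z ≠ istar := fun h => histarB (h ▸ hfB)
        have hw : Function.update z1 istar (N - z1 istar) (f z) = z1 (f z) :=
          Function.update_of_ne hne _ _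
        refine ⟨f z, ?_⟩
        rw [hfz] at hw hne ⊢
        rcases hspec with ⟨hz0, hz1N⟩ | ⟨hzN, hz10⟩
        · right; exact ⟨by rw [hw, hz1N], hz0⟩
        · left; exact ⟨by rw [hw, hz10], hzN⟩
  · -- upper bound: explicit construction
    set a : Fin n → (Fin n → ℕ) := fun i j =>
      if j = i then N - z1 j
      else if z1 j = 0 ∨ z1 j = N then (if j < i then z1 j else 1)
      else z1 j with hadef
    have haii : ∀ i, a i i = N - z1 i := by intro i; simp [hadef]
    have halt : ∀ i j, j ≠ i → j ∈ I → j < i → a i j = z1 j := by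
      intro i j h1 h2 h3; simp [hadef, h1, (memI j).mp h2, h3]
    have hage : ∀ i j, j ≠ i → j ∈ I → ¬ j < i → a i j = 1 := by
      intro i j h1 h2 h3; simp [hadef, h1, (memI j).mp h2, h3]
    have hanI : ∀ i j, j ≠ i → j ∉ I → a i j = z1 j := by
      intro i j h1 h2
      have h2' : ¬ (z1 j = 0 ∨ z1 j = N) := fun h => h2 ((memI j).mpr h)
      simp [hadef, h1, h2']
    -- a i and z1 are non-overlapping for i ∈ I
    have haz1 : ∀ i ∈ I, CubeNonOv n N z1 (a i) := by
      intro i hi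
      refine ⟨i, ?_⟩
      rcases (memI i).mp hi with h0 | hN'
      · left; exact ⟨h0, by rw [haii, h0]; omega⟩
      · right; exact ⟨hN', by rw [haii, hN']; omega⟩
    have haa : ∀ i ∈ I, ∀ i' ∈ I, i < i' → CubeNonOv n N (a i) (a i') := by
      intro i hi i' hi' hlt
      refine ⟨i, ?_⟩
      have h1 : a i' i = z1 i := halt i' i (ne_of_lt hlt) hi hlt
      rcases (memI i).mp hi with h0 | hN'
      · right; exact ⟨by rw [haii, h0]; omega, by rw [h1, h0]⟩
      · left; exact ⟨by rw [haii, hN']; omega, by rw [h1, hN']⟩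
    have hanez1 : ∀ i ∈ I, a i ≠ z1 := by
      intro i hi heq
      have := congrFun heq i
      rw [haii] at this
      rcases (memI i).mp hi with h0 | hN' <;> omega
    refine ⟨insert z1 (I.image a), Finset.mem_insert_self _ _, ?_, ?_, ?_, ?_⟩
    · -- bounds
      intro z hz i
      rcases Finset.mem_insert.mp hz with h | h
      · subst h; exact hz1 i
      · obtain ⟨j, _, rfl⟩ := Finset.mem_image.mp h
        rw [hadef]
        dsimp only
        split
        · omega
        · split
          · split
            · exact hz1 i
            · omega
          · exact hz1 i
    · -- pairwise non-overlapping
      intro x hx y hy hxy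
      rcases Finset.mem_insert.mp hx with hx | hx <;>
        rcases Finset.mem_insert.mp hy with hy | hy
      · exact absurd (hx.trans hy.symm) hxy
      · obtain ⟨j, hj, rfl⟩ := Finset.mem_image.mp hy
        subst hx; exact haz1 j hj
      · obtain ⟨j, hj, rfl⟩ := Finset.mem_image.mp hx
        subst hy
        obtain ⟨i, hor⟩ := haz1 j hj
        exact ⟨i, by tauto⟩
      · obtain ⟨j, hj, rfl⟩ := Finset.mem_image.mp hx
        obtain ⟨j', hj', rfl⟩ := Finset.mem_image.mp hy
        rcases lt_trichotomy j j' with h | h | h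
        · exact haa j hj j' hj' h
        · exact absurd (by rw [h]) hxy
        · obtain ⟨i, hor⟩ := haa j' hj' j hj h
          exact ⟨i, by tauto⟩
    · -- maximality
      rintro ⟨w, _hwb, hwopp⟩
      have hwz1 := hwopp z1 (Finset.mem_insert_self _ _)
      set S : Finset (Fin n) :=
        I.filter (fun j => (w j = 0 ∧ z1 j = N) ∨ (w j = N ∧ z1 j = 0)) with hSdef
      have hSne : S.Nonempty := by
        obtain ⟨j, hj⟩ := hwz1
        refine ⟨j, Finset.mem_filter.mpr ⟨?_, hj⟩⟩
        rcases hj with ⟨_, h⟩ | ⟨_, h⟩ <;> exact (memI j).mpr (by tauto)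
      set i := S.min' hSne with hidef
      have hiS : i ∈ S := S.min'_mem hSne
      have hiI : i ∈ I := (Finset.mem_filter.mp hiS).1
      have hiprop := (Finset.mem_filter.mp hiS).2
      have := hwopp (a i) (Finset.mem_insert_of_mem
        (Finset.mem_image.mpr ⟨i, hiI, rfl⟩))
      obtain ⟨j, hj⟩ := this
      by_cases hji : j = i
      · subst hji
        rw [haii] at hj
        rcases hiprop with ⟨hw0, hzN⟩ | ⟨hwN, hz0⟩ <;>
          rcases hj with ⟨h1, h2⟩ | ⟨h1, h2⟩ <;> omega
      · by_cases hjI : j ∈ I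
        · by_cases hjlt : j < i
          · rw [halt i j hji hjI hjlt] at hj
            have hjS : j ∈ S := by
              refine Finset.mem_filter.mpr ⟨hjI, ?_⟩
              tauto
            have := S.min'_le j hjS
            omega
          · rw [hage i j hji hjI hjlt] at hj
            rcases hj with ⟨_, h⟩ | ⟨_, h⟩ <;> omega
        · rw [hanI i j hji hjI] at hj
          have : ¬ (z1 j = 0 ∨ z1 j = N) := fun h => hjI ((memI j).mpr h)
          rcases hj with ⟨_, h⟩ | ⟨_, h⟩ <;> tauto
    · -- cardinality
      have hinj : Set.InjOn a I := by
        intro i hi i' hi' heq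
        by_contra hne
        rcases lt_trichotomy i i' with h | h | h
        · have h1 := congrFun heq i
          rw [haii, halt i' i (ne_of_lt h) hi h] at h1
          rcases (memI i).mp hi with h0 | hN' <;> omega
        · exact hne h
        · have h1 := congrFun heq i'
          rw [halt i i' (ne_of_lt h) hi' h, haii] at h1
          rcases (memI i').mp hi' with h0 | hN' <;> omega
      have hz1nmem : z1 ∉ I.image a := by
        intro h
        obtain ⟨j, hj, heq⟩ := Finset.mem_image.mp h
        exact hanez1 j hj heq
      rw [Finset.card_insert_of_notMem hz1nmem, Finset.card_image_of_injOn hinj]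
end

section
/- Let G be a combinatorial torus cube packing in dimension n, and for each coordinate j let N_j(G) be the number of distinct parameters occurring in coordinate j of the cubes of G. Then the number of discrete torus cube packings P with vectors in (1/N)Z^n whose combinatorial type is G equals ∏_{j=1}^{n} ∏_{k=1}^{N_j(G)} (2N - 2(k-1)); in particular this number is positive whenever N ≥ max_j N_j(G), and since N_j(G) ≤ 2^{n-1} always holds for a packing, it is positive for N ≥ 2^n. -/
/-- The parameters occurring in coordinate `j` of the packing `G`. -/
def coordParams {m n : ℕ} {α : Type*} [DecidableEq α]
    (G : Fin m → Fin n → α × Bool) (j : Fin n) : Finset α :=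
  Finset.univ.image (fun i : Fin m => (G i j).1)

/-- The discrete torus cube packings (vectors in `(1/N)ℤ^n mod 2`, numerators
in `ZMod (2N)`) whose combinatorial type is `G`: each parameter `t` of
coordinate `j` is assigned a value `a j t`, with `t+1 ↦ a j t + N`, distinct
parameters of a coordinate getting distinct residue classes `{a, a+N}`. -/
def TypeIs {m n N : ℕ} {α : Type*} [DecidableEq α]
    (G : Fin m → Fin n → α × Bool) (P : Fin m → Fin n → ZMod (2 * N)) : Prop :=
  ∃ a : Fin n → α → ZMod (2 * N),
    (∀ j : Fin n, ∀ p ∈ coordParams G j, ∀ p' ∈ coordParams G j, p ≠ p' →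
      a j p ≠ a j p' ∧ a j p ≠ a j p' + (N : ZMod (2 * N))) ∧
    ∀ i j, P i j = a j (G i j).1 + (if (G i j).2 then (N : ZMod (2 * N)) else 0)

-- auxiliary lemmas
lemma key_val {N : ℕ} (hN : 1 ≤ N) (x y : ZMod (2*N)) :
    x.val % N = y.val % N ↔ x = y ∨ x = y + (N : ZMod (2*N)) := by
  haveI : NeZero (2*N) := ⟨by omega⟩
  have hNN : (N : ZMod (2*N)) + (N : ZMod (2*N)) = 0 := by
    have : (((N + N : ℕ)) : ZMod (2*N)) = 0 := by
      rw [show N + N = 2*N by ring, ZMod.natCast_self]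
    push_cast at this; exact this
  have hcast : ∀ z : ZMod (2*N), ((z.val : ℕ) : ZMod (2*N)) = z := fun z => by
    rw [ZMod.natCast_val, ZMod.cast_id]
  constructor
  · intro h
    have hx := ZMod.val_lt x
    have hy := ZMod.val_lt y
    have hxm : x.val % N = if N ≤ x.val then x.val - N else x.val := by
      split
      · rw [Nat.mod_eq_sub_mod (by omega), Nat.mod_eq_of_lt (by omega)]
      · exact Nat.mod_eq_of_lt (by omega)
    have hym : y.val % N = if N ≤ y.val then y.val - N else y.val := by
      split
      · rw [Nat.mod_eq_sub_mod (by omega), Nat.mod_eq_of_lt (by omega)]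
      · exact Nat.mod_eq_of_lt (by omega)
    rw [hxm, hym] at h
    split at h <;> split at h
    · left; apply ZMod.val_injective; omega
    · right
      have hxv : x.val = y.val + N := by omega
      rw [← hcast x, ← hcast y, hxv]; push_cast; ring
    · right
      have hyv : y.val = x.val + N := by omega
      have hy' : y = x + (N : ZMod (2*N)) := by
        rw [← hcast x, ← hcast y, hyv]; push_cast; ring
      rw [hy', add_assoc, hNN, add_zero]
    · left; apply ZMod.val_injective; omega
  · rintro (rfl | rfl)
    · rfl
    · rw [ZMod.val_add, ZMod.val_natCast]
      rw [Nat.mod_mod_of_dvd _ ⟨2, by ring⟩, Nat.mod_eq_of_lt (show N < 2*N by omega),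
        Nat.add_mod_right]

lemma roundtrip {N : ℕ} (hN : 1 ≤ N) (x : ZMod (2*N)) :
    ((x.val % N : ℕ) : ZMod (2*N)) + (if N ≤ x.val then (N : ZMod (2*N)) else 0) = x := by
  haveI : NeZero (2*N) := ⟨by omega⟩
  have hx := ZMod.val_lt x
  have hcast : ((x.val : ℕ) : ZMod (2*N)) = x := by rw [ZMod.natCast_val, ZMod.cast_id]
  by_cases h : N ≤ x.val
  · rw [if_pos h, Nat.mod_eq_sub_mod h, Nat.mod_eq_of_lt (by omega), ← Nat.cast_add,
      Nat.sub_add_cancel h, hcast]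
  · rw [if_neg h, Nat.mod_eq_of_lt (by omega), add_zero, hcast]

lemma val_of_pair {N : ℕ} (hN : 1 ≤ N) (k : ℕ) (hk : k < N) (s : Bool) :
    ((( k : ZMod (2*N)) + (if s then (N : ZMod (2*N)) else 0)).val) = k + (if s then N else 0) := by
  haveI : NeZero (2*N) := ⟨by omega⟩
  cases s
  · simp [ZMod.val_natCast, Nat.mod_eq_of_lt (show k < 2*N by omega)]
  · simp only [if_true]
    rw [ZMod.val_add, ZMod.val_natCast, ZMod.val_natCast,
      Nat.mod_eq_of_lt (show k < 2*N by omega), Nat.mod_eq_of_lt (show N < 2*N by omega),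
      Nat.mod_eq_of_lt (show k + N < 2*N by omega)]

lemma count_good {N : ℕ} (hN : 1 ≤ N) {α : Type*} [DecidableEq α] (S : Finset α) :
    Nat.card {b : S → ZMod (2*N) //
        ∀ p p' : S, p ≠ p' → b p ≠ b p' ∧ b p ≠ b p' + (N : ZMod (2*N))}
      = ∏ k ∈ Finset.range S.card, (2*N - 2*k) := by
  haveI : NeZero (2*N) := ⟨by omega⟩
  have e : {b : S → ZMod (2*N) //
        ∀ p p' : S, p ≠ p' → b p ≠ b p' ∧ b p ≠ b p' + (N : ZMod (2*N))}
      ≃ (S ↪ Fin N) × (S → Bool) :=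
  { toFun := fun b =>
      (⟨fun p => ⟨(b.1 p).val % N, Nat.mod_lt _ (by omega)⟩, by
        intro p p' h
        by_contra hpp
        have := (b.2 p p' hpp)
        have h' : (b.1 p).val % N = (b.1 p').val % N := by
          simpa using congrArg Fin.val h
        rcases (key_val hN _ _).mp h' with h2 | h2
        · exact this.1 h2
        · exact this.2 h2⟩,
      fun p => decide (N ≤ (b.1 p).val))
    invFun := fun fg =>
      ⟨fun p => ((fg.1 p : ℕ) : ZMod (2*N)) + (if fg.2 p then (N : ZMod (2*N)) else 0), by
        intro p p' hpp
        have hne : fg.1 p ≠ fg.1 p' := fun h => hpp (fg.1.injective h)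
        have hv : ∀ q : S, (((fg.1 q : ℕ) : ZMod (2*N)) + (if fg.2 q then (N : ZMod (2*N)) else 0)).val % N
            = (fg.1 q : ℕ) := by
          intro q
          rw [val_of_pair hN _ (fg.1 q).isLt]
          split <;> simp [Nat.mod_eq_of_lt (fg.1 q).isLt, Nat.add_mod_right,
            Nat.mod_eq_of_lt (fg.1 q).isLt]
        constructor
        · intro h
          have := (key_val hN _ _).mpr (Or.inl h)
          rw [hv p, hv p'] at this
          exact hne (Fin.ext this)
        · intro h
          have := (key_val hN _ _).mpr (Or.inr h)
          rw [hv p, hv p'] at this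
          exact hne (Fin.ext this)⟩
    left_inv := fun b => by
      apply Subtype.ext
      funext p
      simp only [decide_eq_true_eq]
      exact roundtrip hN (b.1 p)
    right_inv := fun fg => by
      have hv : ∀ q : S, (((fg.1 q : ℕ) : ZMod (2*N)) + (if fg.2 q then (N : ZMod (2*N)) else 0)).val
          = (fg.1 q : ℕ) + (if fg.2 q then N else 0) := fun q => val_of_pair hN _ (fg.1 q).isLt _
      ext p
      · change ((((fg.1 p : ℕ) : ZMod (2*N)) + (if fg.2 p then (N : ZMod (2*N)) else 0)).val % N) = (fg.1 p : ℕ)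
        rw [hv p]
        split <;> simp [Nat.mod_eq_of_lt (fg.1 p).isLt, Nat.add_mod_right,
          Nat.mod_eq_of_lt (fg.1 p).isLt]
      · simp only
        rw [hv p]
        rcases Bool.eq_false_or_eq_true (fg.2 p) with h | h <;>
          simp [h, (fg.1 p).isLt, Nat.not_le.mpr (fg.1 p).isLt] }
  rw [Nat.card_eq_of_bijective e e.bijective]
  rw [Nat.card_prod, Nat.card_eq_fintype_card, Nat.card_eq_fintype_card,
    Fintype.card_embedding_eq, Fintype.card_coe, Fintype.card_fun, Fintype.card_coe,
    Fintype.card_fin, Fintype.card_bool]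
  rw [Nat.descFactorial_eq_prod_range]
  have hp : ∏ k ∈ Finset.range S.card, (2*N - 2*k)
      = ∏ k ∈ Finset.range S.card, 2 * (N - k) := by
    apply Finset.prod_congr rfl; intros; omega
  rw [hp, Finset.prod_mul_distrib, Finset.prod_const, Finset.card_range]
  ring


/-- The number of discrete torus cube packings with grid
parameter `N` of combinatorial type `G` is
`∏_{j=1}^n ∏_{k=1}^{N_j(G)} (2N - 2(k-1))`; moreover `N_j(G) ≤ 2^(n-1)` for
every coordinate `j`, so the number is positive whenever `N ≥ 2^n`. -/
theorem stmt_19 {m n N : ℕ} {α : Type*} [DecidableEq α] (hN : 1 ≤ N)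
    (G : Fin m → Fin n → α × Bool) (hpack : IsPacking G) :
    Nat.card {P : Fin m → Fin n → ZMod (2 * N) // TypeIs G P}
      = ∏ j : Fin n, ∏ k ∈ Finset.range (coordParams G j).card, (2 * N - 2 * k) ∧
    (∀ j : Fin n, (coordParams G j).card ≤ 2 ^ (n - 1)) ∧
    (2 ^ n ≤ N → 0 < Nat.card {P : Fin m → Fin n → ZMod (2 * N) // TypeIs G P}) := by
  haveI : NeZero (2*N) := ⟨by omega⟩
  classical
  have hmem : ∀ i j, (G i j).1 ∈ coordParams G j := fun i j =>
    Finset.mem_image_of_mem _ (Finset.mem_univ i)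
  have hcount : Nat.card {P : Fin m → Fin n → ZMod (2 * N) // TypeIs G P}
      = ∏ j : Fin n, ∏ k ∈ Finset.range (coordParams G j).card, (2 * N - 2 * k) := by
    set Φ : (∀ j : Fin n, {b : coordParams G j → ZMod (2*N) //
          ∀ p p' : coordParams G j, p ≠ p' → b p ≠ b p' ∧ b p ≠ b p' + (N : ZMod (2*N))})
        → {P : Fin m → Fin n → ZMod (2 * N) // TypeIs G P} := fun b =>
      ⟨fun i j => (b j).1 ⟨(G i j).1, hmem i j⟩ + (if (G i j).2 then (N : ZMod (2*N)) else 0), by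
        refine ⟨fun j p => if h : p ∈ coordParams G j then (b j).1 ⟨p, h⟩ else 0, ?_, ?_⟩
        · intro j p hp p' hp' hne
          dsimp only
          rw [dif_pos hp, dif_pos hp']
          exact (b j).2 ⟨p, hp⟩ ⟨p', hp'⟩ (fun h => hne (congrArg Subtype.val h))
        · intro i j
          dsimp only
          rw [dif_pos (hmem i j)]⟩ with hΦ
    have hbij : Function.Bijective Φ := by
      constructor
      · intro b b' h
        have h2 : ∀ i j, (b j).1 ⟨(G i j).1, hmem i j⟩ + (if (G i j).2 then (N : ZMod (2*N)) else 0)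
            = (b' j).1 ⟨(G i j).1, hmem i j⟩ + (if (G i j).2 then (N : ZMod (2*N)) else 0) :=
          fun i j => congrFun (congrFun (congrArg Subtype.val h) i) j
        funext j
        apply Subtype.ext
        funext p
        obtain ⟨i, _, hi⟩ := Finset.mem_image.mp p.2
        have hpe : (⟨(G i j).1, hmem i j⟩ : coordParams G j) = p := Subtype.ext hi
        rw [← hpe]
        exact add_right_cancel (h2 i j)
      · rintro ⟨P, a, ha1, ha2⟩
        refine ⟨fun j => ⟨fun p => a j p.1, ?_⟩, ?_⟩
        · intro p p' hne
          exact ha1 j p.1 p.2 p'.1 p'.2 (fun h => hne (Subtype.ext h))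
        · apply Subtype.ext
          funext i j
          exact (ha2 i j).symm
    rw [← Nat.card_eq_of_bijective Φ hbij, Nat.card_pi]
    exact Finset.prod_congr rfl fun j _ => count_good hN _
  have hbound : ∀ j : Fin n, (coordParams G j).card ≤ 2 ^ (n - 1) := by
    intro j
    have hrep : ∀ p : coordParams G j, ∃ i : Fin m, (G i j).1 = p.1 := fun p => by
      obtain ⟨i, _, hi⟩ := Finset.mem_image.mp p.2; exact ⟨i, hi⟩
    choose rep hrep using hrep
    have hF : Function.Injective
        (fun p : coordParams G j => fun j' : {j' : Fin n // j' ≠ j} => (G (rep p) j').2) := by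
      intro p p' h
      by_contra hne
      have hrepne : rep p ≠ rep p' := fun he => hne (Subtype.ext (by rw [← hrep p, ← hrep p', he]))
      obtain ⟨j0, hj1, hj2⟩ := hpack _ _ hrepne
      have hj0 : j0 ≠ j := by
        intro he; subst he
        rw [hrep p, hrep p'] at hj1
        exact hne (Subtype.ext hj1)
      exact hj2 (congrFun h ⟨j0, hj0⟩)
    calc (coordParams G j).card = Fintype.card (coordParams G j) := (Fintype.card_coe _).symm
      _ ≤ Fintype.card ({j' : Fin n // j' ≠ j} → Bool) := Fintype.card_le_of_injective _ hF
      _ = 2 ^ Fintype.card {j' : Fin n // j' ≠ j} := by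
          rw [Fintype.card_fun, Fintype.card_bool]
      _ ≤ 2 ^ (n - 1) := by
          apply Nat.pow_le_pow_right (by norm_num)
          have : Fintype.card {j' : Fin n // j' ≠ j} = n - 1 := by
            rw [Fintype.card_subtype_compl, Fintype.card_subtype_eq, Fintype.card_fin]
          omega
  refine ⟨hcount, hbound, fun hle => ?_⟩
  rw [hcount]
  apply Finset.prod_pos
  intro j _
  apply Finset.prod_pos
  intro k hk
  have h1 := hbound j
  have h2 := Finset.mem_range.mp hk
  have h3 : 2 ^ (n - 1) ≤ 2 ^ n := Nat.pow_le_pow_right (by norm_num) (Nat.sub_le n 1)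
  omega
end
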